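/- arXiv:1306.5371 — 7 statements merged into one kernel-verified Lean document; each statement's English description precedes it below -/
import Mathlib

section
/- For any positive integers m, n, y, z with gcd(n,y)=1, and integers K ≥ L ≥ 0, every coefficient in the power series expansion of 1/((q^z;q^m)_K (q^{nyz};q^{nm})_L) − 1/((q^{yz};q^m)_K (q^{nz};q^{nm})_L) is nonnegative. -/
open Finset PowerSeries

/-- `(q^c; q^m)_L = ∏_{j=0}^{L-1} (1 - q^{c+jm})` as a formal power series over `ℚ`. -/
noncomputable def qp (c m L : ℕ) : PowerSeries ℚ :=
  ∏ j ∈ Finset.range L, (1 - (PowerSeries.X : PowerSeries ℚ) ^ (c + j * m))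

/-! ### Geometric series `1/(1-X^e)` -/

noncomputable def geo (e : ℕ) : PowerSeries ℚ :=
  PowerSeries.mk fun x => if e ∣ x then 1 else 0

lemma geo_mul (e : ℕ) (he : 0 < e) : geo e * (1 - X ^ e) = 1 := by
  ext n
  rw [mul_sub, mul_one, map_sub, PowerSeries.coeff_mul_X_pow']
  rcases Nat.eq_zero_or_pos n with rfl | hn
  · simp [geo, Nat.not_le.2 he]
  · rw [PowerSeries.coeff_one, if_neg hn.ne']
    by_cases hle : e ≤ n
    · rw [if_pos hle]
      simp only [geo, coeff_mk]
      have : e ∣ n ↔ e ∣ n - e := by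
        constructor
        · intro h; exact (Nat.dvd_sub h dvd_rfl)
        · intro h; have := Nat.dvd_add h dvd_rfl
          rwa [Nat.sub_add_cancel hle] at this
      by_cases hd : e ∣ n
      · rw [if_pos hd, if_pos (this.1 hd)]; ring
      · rw [if_neg hd, if_neg (fun hc => hd (this.2 hc))]; ring
    · rw [if_neg hle]
      simp only [geo, coeff_mk, sub_zero]
      rw [if_neg]
      intro hd
      exact hle (Nat.le_of_dvd hn hd)

lemma constCoeff_prod_one_sub (k : ℕ) (E : ℕ → ℕ) (hE : ∀ j, 0 < E j) :
    constantCoeff (∏ j ∈ range k, (1 - (X : PowerSeries ℚ) ^ (E j))) ≠ 0 := by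
  rw [map_prod]
  have : ∀ j ∈ range k, constantCoeff (1 - (X : PowerSeries ℚ) ^ (E j)) = 1 := by
    intro j _
    rw [map_sub, map_one, map_pow, constantCoeff_X, zero_pow (hE j).ne']
    ring
  rw [Finset.prod_congr rfl this, Finset.prod_const_one]
  exact one_ne_zero

lemma inv_prod_one_sub (k : ℕ) (E : ℕ → ℕ) (hE : ∀ j, 0 < E j) :
    (∏ j ∈ range k, (1 - (X : PowerSeries ℚ) ^ (E j)))⁻¹ = ∏ j ∈ range k, geo (E j) := by
  rw [PowerSeries.inv_eq_iff_mul_eq_one (constCoeff_prod_one_sub k E hE),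
    ← Finset.prod_mul_distrib]
  have : ∀ j ∈ range k, geo (E j) * (1 - (X : PowerSeries ℚ) ^ (E j)) = 1 :=
    fun j _ => geo_mul (E j) (hE j)
  rw [Finset.prod_congr rfl this, Finset.prod_const_one]

lemma coeff_geo_prod (E : ℕ → ℕ) (k x : ℕ) :
    coeff x (∏ j ∈ range k, geo (E j)) =
      ((finsuppAntidiag (range k) x).filter
        (fun l => ∀ j ∈ range k, E j ∣ l j)).card := by
  classical
  rw [PowerSeries.coeff_prod]
  have h1 : ∀ l ∈ finsuppAntidiag (range k) x,
      (∏ i ∈ range k, coeff (l i) (geo (E i)))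
        = if (∀ j ∈ range k, E j ∣ l j) then (1 : ℚ) else 0 := by
    intro l _
    simp only [geo, coeff_mk]
    exact Finset.prod_boole
  rw [Finset.sum_congr rfl h1, Finset.sum_boole]

lemma qp_mul (c1 m1 c2 m2 K L : ℕ) :
    qp c1 m1 K * qp c2 m2 L
      = ∏ j ∈ range (K + L),
          (1 - (X : PowerSeries ℚ) ^ (if j < K then c1 + j * m1 else c2 + (j - K) * m2)) := by
  rw [Finset.prod_range_add, qp, qp]
  congr 1
  · refine Finset.prod_congr rfl fun j hj => ?_
    rw [if_pos (mem_range.1 hj)]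
  · refine Finset.prod_congr rfl fun i _ => ?_
    rw [if_neg (by omega), Nat.add_sub_cancel_left]

/-! ### The injection -/

def cf (y z m : ℕ) (l : ℕ →₀ ℕ) (j : ℕ) : ℕ := l j / (y * z + j * m)

def df (n z m K : ℕ) (l : ℕ →₀ ℕ) (i : ℕ) : ℕ := l (K + i) / (n * z + i * (n * m))

def rf (n y z m L : ℕ) (l : ℕ →₀ ℕ) (j : ℕ) : ℕ :=
  if j < L then cf y z m l j % n else cf y z m l j

def Rf (n y z m K L : ℕ) (l : ℕ →₀ ℕ) : ℕ := ∑ j ∈ range K, rf n y z m L l j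

def af (n y z m K L : ℕ) (l : ℕ →₀ ℕ) (j : ℕ) : ℕ :=
  rf n y z m L l j + (if j < L then n * df n z m K l j else 0)
    + (if j = 0 then (y - 1) * Rf n y z m K L l else 0)

def bf (n y z m : ℕ) (l : ℕ →₀ ℕ) (i : ℕ) : ℕ := cf y z m l i / n

def phiFun (n y z m K L : ℕ) (l : ℕ →₀ ℕ) (j : ℕ) : ℕ :=
  if j < K then af n y z m K L l j * (z + j * m)
  else if j < K + L then bf n y z m l (j - K) * (n * y * z + (j - K) * (n * m))
  else 0

noncomputable def phi (n y z m K L : ℕ) (l : ℕ →₀ ℕ) : ℕ →₀ ℕ :=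
  Finsupp.onFinset (range (K + L)) (phiFun n y z m K L l) (by
    intro j h
    rw [mem_range]
    by_contra hc
    push_neg at hc
    rw [phiFun, if_neg (by omega), if_neg (by omega)] at h
    exact h rfl)

lemma phi_apply (n y z m K L : ℕ) (l : ℕ →₀ ℕ) (j : ℕ) :
    phi n y z m K L l j = phiFun n y z m K L l j := rfl

lemma sum_phi (n y z m K L x : ℕ) (hy : 0 < y) (hKL : L ≤ K) (l : ℕ →₀ ℕ)
    (hdvd : ∀ j ∈ range (K + L),
      (if j < K then y * z + j * m else n * z + (j - K) * (n * m)) ∣ l j)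
    (hsum : ∑ j ∈ range (K + L), l j = x) :
    ∑ j ∈ range (K + L), phiFun n y z m K L l j = x := by
  obtain ⟨Y, rfl⟩ : ∃ Y, y = Y + 1 := ⟨y - 1, by omega⟩
  rcases Nat.eq_zero_or_pos K with rfl | hK
  · obtain rfl : L = 0 := by omega
    simpa using hsum
  have hlj : ∀ j ∈ range K, l j = cf (Y + 1) z m l j * ((Y + 1) * z + j * m) := by
    intro j hj
    rw [mem_range] at hj
    have h := hdvd j (mem_range.2 (by omega))
    rw [if_pos hj] at h
    exact (Nat.div_mul_cancel h).symm
  have hli : ∀ i ∈ range L, l (K + i) = df n z m K l i * (n * z + i * (n * m)) := by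
    intro i hi
    rw [mem_range] at hi
    have h := hdvd (K + i) (mem_range.2 (by omega))
    rw [if_neg (by omega), Nat.add_sub_cancel_left] at h
    exact (Nat.div_mul_cancel h).symm
  rw [Finset.sum_range_add] at hsum ⊢
  have h1 : ∀ j ∈ range K,
      phiFun n (Y + 1) z m K L l j = af n (Y + 1) z m K L l j * (z + j * m) := by
    intro j hj
    rw [phiFun, if_pos (mem_range.1 hj)]
  have h2 : ∀ i ∈ range L,
      phiFun n (Y + 1) z m K L l (K + i)
        = bf n (Y + 1) z m l i * (n * ((Y + 1) * z + i * m)) := by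
    intro i hi
    rw [mem_range] at hi
    rw [phiFun, if_neg (by omega), if_pos (by omega), Nat.add_sub_cancel_left]
    ring
  rw [Finset.sum_congr rfl h1, Finset.sum_congr rfl h2]
  have haf : ∀ j ∈ range K, af n (Y + 1) z m K L l j * (z + j * m)
      = rf n (Y + 1) z m L l j * (z + j * m)
        + ((if j < L then n * df n z m K l j * (z + j * m) else 0)
        + (if j = 0 then Y * Rf n (Y + 1) z m K L l * (z + j * m) else 0)) := by
    intro j _
    rw [af, Nat.add_sub_cancel]
    split_ifs <;> ring
  rw [Finset.sum_congr rfl haf, Finset.sum_add_distrib, Finset.sum_add_distrib]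
  have h3 : ∑ j ∈ range K, (if j = 0 then Y * Rf n (Y + 1) z m K L l * (z + j * m) else 0)
      = ∑ j ∈ range K, Y * rf n (Y + 1) z m L l j * z := by
    rw [Finset.sum_ite_eq' (range K) 0
      (fun j => Y * Rf n (Y + 1) z m K L l * (z + j * m)), if_pos (mem_range.2 hK), Rf,
      Finset.mul_sum, Finset.sum_mul]
    refine Finset.sum_congr rfl fun j _ => ?_
    ring
  have h2' : ∑ j ∈ range K, (if j < L then n * df n z m K l j * (z + j * m) else 0)
      = ∑ j ∈ range L, df n z m K l j * (n * z + j * (n * m)) := by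
    rw [← Finset.sum_subset (Finset.range_subset_range.2 hKL)
      (fun j _ hj => by rw [if_neg (by simpa using hj)])]
    refine Finset.sum_congr rfl fun j hj => ?_
    rw [if_pos (mem_range.1 hj)]
    ring
  have h13 : ∑ j ∈ range K, rf n (Y + 1) z m L l j * (z + j * m)
        + ∑ j ∈ range K, Y * rf n (Y + 1) z m L l j * z
      = ∑ j ∈ range K, rf n (Y + 1) z m L l j * ((Y + 1) * z + j * m) := by
    rw [← Finset.sum_add_distrib]
    refine Finset.sum_congr rfl fun j _ => ?_
    ring
  have hsplitr : ∑ j ∈ range K, rf n (Y + 1) z m L l j * ((Y + 1) * z + j * m)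
      = ∑ j ∈ range L, rf n (Y + 1) z m L l j * ((Y + 1) * z + j * m)
        + ∑ i ∈ range (K - L), cf (Y + 1) z m l (L + i) * ((Y + 1) * z + (L + i) * m) := by
    have hK' : K = L + (K - L) := by omega
    calc ∑ j ∈ range K, rf n (Y + 1) z m L l j * ((Y + 1) * z + j * m)
        = ∑ j ∈ range (L + (K - L)), rf n (Y + 1) z m L l j * ((Y + 1) * z + j * m) := by
          rw [← hK']
      _ = _ := by
          rw [Finset.sum_range_add]
          congr 1
          refine Finset.sum_congr rfl fun i _ => ?_
          rw [rf, if_neg (by omega)]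
  have hsplitc : ∑ j ∈ range K, cf (Y + 1) z m l j * ((Y + 1) * z + j * m)
      = ∑ j ∈ range L, cf (Y + 1) z m l j * ((Y + 1) * z + j * m)
        + ∑ i ∈ range (K - L), cf (Y + 1) z m l (L + i) * ((Y + 1) * z + (L + i) * m) := by
    have hK' : K = L + (K - L) := by omega
    calc ∑ j ∈ range K, cf (Y + 1) z m l j * ((Y + 1) * z + j * m)
        = ∑ j ∈ range (L + (K - L)), cf (Y + 1) z m l j * ((Y + 1) * z + j * m) := by
          rw [← hK']
      _ = _ := Finset.sum_range_add _ _ _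
  have hmerge : ∑ j ∈ range L, rf n (Y + 1) z m L l j * ((Y + 1) * z + j * m)
        + ∑ i ∈ range L, bf n (Y + 1) z m l i * (n * ((Y + 1) * z + i * m))
      = ∑ j ∈ range L, cf (Y + 1) z m l j * ((Y + 1) * z + j * m) := by
    rw [← Finset.sum_add_distrib]
    refine Finset.sum_congr rfl fun j hj => ?_
    rw [rf, if_pos (mem_range.1 hj), bf]
    have hmd := Nat.mod_add_div (cf (Y + 1) z m l j) n
    calc cf (Y + 1) z m l j % n * ((Y + 1) * z + j * m)
          + cf (Y + 1) z m l j / n * (n * ((Y + 1) * z + j * m))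
        = (cf (Y + 1) z m l j % n + n * (cf (Y + 1) z m l j / n))
            * ((Y + 1) * z + j * m) := by ring
      _ = _ := by rw [hmd]
  have hSl1 : ∑ j ∈ range K, l j
      = ∑ j ∈ range K, cf (Y + 1) z m l j * ((Y + 1) * z + j * m) :=
    Finset.sum_congr rfl hlj
  have hSl2 : ∑ i ∈ range L, l (K + i)
      = ∑ i ∈ range L, df n z m K l i * (n * z + i * (n * m)) :=
    Finset.sum_congr rfl hli
  omega

lemma cf_lt_aux : True := trivial

lemma key_card_le (m n y z K L x : ℕ) (hm : 0 < m) (hn : 0 < n) (hy : 0 < y) (hz : 0 < z)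
    (hco : Nat.Coprime n y) (hKL : L ≤ K) :
    (((finsuppAntidiag (range (K + L)) x)).filter
        (fun l => ∀ j ∈ range (K + L),
          (if j < K then y * z + j * m else n * z + (j - K) * (n * m)) ∣ l j)).card
      ≤ (((finsuppAntidiag (range (K + L)) x)).filter
        (fun l => ∀ j ∈ range (K + L),
          (if j < K then z + j * m else n * y * z + (j - K) * (n * m)) ∣ l j)).card := by
  classical
  rcases Nat.eq_zero_or_pos K with rfl | hK
  · obtain rfl : L = 0 := by omega
    apply le_of_eq
    congr 1
  apply Finset.card_le_card_of_injOn (phi n y z m K L)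
  · -- maps to
    intro l hl
    rw [Finset.mem_coe, Finset.mem_filter, mem_finsuppAntidiag] at hl ⊢
    obtain ⟨⟨hsum, _⟩, hdvd⟩ := hl
    refine ⟨⟨?_, Finsupp.support_onFinset_subset⟩, ?_⟩
    · exact sum_phi n y z m K L x hy hKL l hdvd hsum
    · intro j hj
      rw [mem_range] at hj
      rw [phi_apply, phiFun]
      by_cases hjK : j < K
      · rw [if_pos hjK, if_pos hjK]
        exact dvd_mul_left _ _
      · rw [if_neg hjK, if_neg hjK, if_pos (by omega)]
        exact dvd_mul_left _ _
  · -- injective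
    intro l hl l' hl' heq
    simp only [Finset.mem_coe, Finset.mem_filter, mem_finsuppAntidiag] at hl hl'
    obtain ⟨⟨hsum, hsupp⟩, hdvd⟩ := hl
    obtain ⟨⟨hsum', hsupp'⟩, hdvd'⟩ := hl'
    obtain ⟨Y, rfl⟩ : ∃ Y, y = Y + 1 := ⟨y - 1, by omega⟩
    -- extract equality of a's and b's
    have ha : ∀ j, j < K → af n (Y + 1) z m K L l j = af n (Y + 1) z m K L l' j := by
      intro j hj
      have h := DFunLike.congr_fun heq j
      rw [phi_apply, phi_apply, phiFun, phiFun, if_pos hj, if_pos hj] at h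
      exact Nat.eq_of_mul_eq_mul_right (by omega) h
    have hb : ∀ i, i < L → bf n (Y + 1) z m l i = bf n (Y + 1) z m l' i := by
      intro i hi
      have h := DFunLike.congr_fun heq (K + i)
      simp only [phi_apply, phiFun, if_neg (show ¬ K + i < K by omega),
        if_pos (show K + i < K + L by omega), Nat.add_sub_cancel_left] at h
      have hpos : 0 < n * (Y + 1) * z + i * (n * m) :=
        Nat.lt_of_lt_of_le (Nat.mul_pos (Nat.mul_pos hn (Nat.succ_pos Y)) hz)
          (Nat.le_add_right _ _)
      exact Nat.eq_of_mul_eq_mul_right hpos h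
    -- recovery for 1 ≤ j < K
    have hrec : ∀ j, 1 ≤ j → j < K →
        cf (Y + 1) z m l j = cf (Y + 1) z m l' j
          ∧ rf n (Y + 1) z m L l j = rf n (Y + 1) z m L l' j
          ∧ (j < L → df n z m K l j = df n z m K l' j) := by
      intro j hj1 hjK
      have h := ha j hjK
      simp only [af, if_neg (show ¬ j = 0 by omega), add_zero] at h
      by_cases hjL : j < L
      · simp only [rf, if_pos hjL] at h ⊢
        have hmod : ∀ (t : ℕ →₀ ℕ),
            (cf (Y + 1) z m t j % n + n * df n z m K t j) % n = cf (Y + 1) z m t j % n := by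
          intro t
          rw [Nat.add_mul_mod_self_left]
          exact Nat.mod_eq_of_lt (Nat.mod_lt _ hn)
        have hρ : cf (Y + 1) z m l j % n = cf (Y + 1) z m l' j % n := by
          rw [← hmod l, ← hmod l', h]
        have hd : df n z m K l j = df n z m K l' j := by
          rw [hρ] at h
          have h' := Nat.add_left_cancel h
          exact Nat.eq_of_mul_eq_mul_left hn h'
        refine ⟨?_, hρ, fun _ => hd⟩
        have hc1 := Nat.div_add_mod (cf (Y + 1) z m l j) n
        have hc2 := Nat.div_add_mod (cf (Y + 1) z m l' j) n
        have hbj := hb j hjL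
        rw [bf, bf] at hbj
        rw [hbj, hρ] at hc1
        omega
      · simp only [rf, if_neg hjL, add_zero] at h
        simp only [rf, if_neg hjL]
        exact ⟨h, h, fun hc => absurd hc hjL⟩
    -- split off the j = 0 term of Rf
    obtain ⟨K', rfl⟩ : ∃ K', K = K' + 1 := ⟨K - 1, by omega⟩
    have hT : ∑ i ∈ range K', rf n (Y + 1) z m L l (i + 1)
        = ∑ i ∈ range K', rf n (Y + 1) z m L l' (i + 1) := by
      refine Finset.sum_congr rfl fun i hi => ?_
      have hi' := mem_range.1 hi
      exact (hrec (i + 1) (by omega) (by omega)).2.1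
    have hRl : Rf n (Y + 1) z m (K' + 1) L l
        = rf n (Y + 1) z m L l 0 + ∑ i ∈ range K', rf n (Y + 1) z m L l (i + 1) := by
      rw [Rf, Finset.sum_range_succ']
      omega
    have hRl' : Rf n (Y + 1) z m (K' + 1) L l'
        = rf n (Y + 1) z m L l' 0 + ∑ i ∈ range K', rf n (Y + 1) z m L l' (i + 1) := by
      rw [Rf, Finset.sum_range_succ']
      omega
    -- handle j = 0
    have h0 := ha 0 (by omega)
    simp only [af, if_pos (rfl : (0:ℕ) = 0), Nat.add_sub_cancel] at h0
    rw [hRl, hRl', ← hT] at h0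
    have hc0 : cf (Y + 1) z m l 0 = cf (Y + 1) z m l' 0 ∧
        (0 < L → df n z m (K' + 1) l 0 = df n z m (K' + 1) l' 0) := by
      set T := ∑ i ∈ range K', rf n (Y + 1) z m L l (i + 1) with hTdef
      by_cases hL : 0 < L
      · simp only [rf, if_pos hL] at h0
        set A := cf (Y + 1) z m l 0 % n with hA
        set B := cf (Y + 1) z m l' 0 % n with hB
        set D := df n z m (K' + 1) l 0 with hD
        set D' := df n z m (K' + 1) l' 0 with hD'
        -- h0 : A + n*D + Y*(A+T) = B + n*D' + Y*(B+T)
        have h4 : (Y + 1) * A + n * D + Y * T = (Y + 1) * B + n * D' + Y * T := by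
          calc (Y + 1) * A + n * D + Y * T = A + n * D + Y * (A + T) := by ring
            _ = B + n * D' + Y * (B + T) := h0
            _ = (Y + 1) * B + n * D' + Y * T := by ring
        have h5 : (Y + 1) * A + n * D = (Y + 1) * B + n * D' := Nat.add_right_cancel h4
        have hmod : ((Y + 1) * A + n * D) % n = ((Y + 1) * B + n * D') % n := by rw [h5]
        rw [Nat.add_mul_mod_self_left, Nat.add_mul_mod_self_left] at hmod
        have hAB : A = B := by
          have hmeq : A ≡ B [MOD n] := Nat.ModEq.cancel_left_of_coprime hco hmod
          have hAn : A < n := Nat.mod_lt _ hn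
          have hBn : B < n := Nat.mod_lt _ hn
          have := hmeq
          rwa [Nat.ModEq, Nat.mod_eq_of_lt hAn, Nat.mod_eq_of_lt hBn] at this
        have hDD : D = D' := by
          rw [hAB] at h5
          have h6 := Nat.add_left_cancel h5
          exact Nat.eq_of_mul_eq_mul_left hn h6
        refine ⟨?_, fun _ => hDD⟩
        have hc1 := Nat.div_add_mod (cf (Y + 1) z m l 0) n
        have hc2 := Nat.div_add_mod (cf (Y + 1) z m l' 0) n
        have hbj := hb 0 hL
        rw [bf, bf] at hbj
        have hmm : cf (Y + 1) z m l 0 % n = cf (Y + 1) z m l' 0 % n := by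
          rw [← hA, ← hB, hAB]
        rw [hbj, hmm] at hc1
        omega
      · simp only [rf, if_neg hL, add_zero] at h0
        set A := cf (Y + 1) z m l 0 with hA
        set B := cf (Y + 1) z m l' 0 with hB
        have h4 : A * (Y + 1) + Y * T = B * (Y + 1) + Y * T := by
          calc A * (Y + 1) + Y * T = A + Y * (A + T) := by ring
            _ = B + Y * (B + T) := h0
            _ = B * (Y + 1) + Y * T := by ring
        have h5 := Nat.add_right_cancel h4
        exact ⟨Nat.eq_of_mul_eq_mul_right (by omega) h5, fun hc => absurd hc hL⟩
    -- conclude l = l'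
    ext j
    by_cases hjK : j < K' + 1
    · have hcj : cf (Y + 1) z m l j = cf (Y + 1) z m l' j := by
        rcases Nat.eq_zero_or_pos j with rfl | hj1
        · exact hc0.1
        · exact (hrec j hj1 hjK).1
      have h1 := hdvd j (mem_range.2 (by omega))
      have h1' := hdvd' j (mem_range.2 (by omega))
      rw [if_pos hjK] at h1 h1'
      rw [← Nat.div_mul_cancel h1, ← Nat.div_mul_cancel h1']
      rw [cf, cf] at hcj
      rw [hcj]
    · by_cases hjKL : j < K' + 1 + L
      · have hiL : j - (K' + 1) < L := by omega
        have hji : j = K' + 1 + (j - (K' + 1)) := by omega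
        have hdj : df n z m (K' + 1) l (j - (K' + 1)) = df n z m (K' + 1) l' (j - (K' + 1)) := by
          rcases Nat.eq_zero_or_pos (j - (K' + 1)) with he | hj1
          · rw [he]
            exact hc0.2 (by omega)
          · exact (hrec (j - (K' + 1)) hj1 (by omega)).2.2 hiL
        have h1 := hdvd j (mem_range.2 (by omega))
        have h1' := hdvd' j (mem_range.2 (by omega))
        rw [if_neg hjK] at h1 h1'
        rw [← Nat.div_mul_cancel h1, ← Nat.div_mul_cancel h1']
        rw [df, df] at hdj
        rw [hji] at hdj ⊢
        rw [Nat.add_sub_cancel_left] at hdj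
        rw [Nat.add_sub_cancel_left]
        rw [hdj]
      · have hl0 : l j = 0 := by
          rw [← Finsupp.notMem_support_iff]
          intro hmem
          have := mem_range.1 (hsupp hmem)
          omega
        have hl0' : l' j = 0 := by
          rw [← Finsupp.notMem_support_iff]
          intro hmem
          have := mem_range.1 (hsupp' hmem)
          omega
        rw [hl0, hl0']


theorem main_thm (m n y z K L : ℕ) (hm : 0 < m) (hn : 0 < n) (hy : 0 < y) (hz : 0 < z)
    (hco : Nat.Coprime n y) (hKL : L ≤ K) (x : ℕ) :
    0 ≤ PowerSeries.coeff (R := ℚ) x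
      ((qp z m K * qp (n * y * z) (n * m) L)⁻¹
        - (qp (y * z) m K * qp (n * z) (n * m) L)⁻¹) := by
  classical
  have hE1 : ∀ j : ℕ, 0 < (if j < K then z + j * m else n * y * z + (j - K) * (n * m)) := by
    intro j
    split
    · omega
    · exact Nat.lt_of_lt_of_le (Nat.mul_pos (Nat.mul_pos hn hy) hz) (Nat.le_add_right _ _)
  have hE2 : ∀ j : ℕ, 0 < (if j < K then y * z + j * m else n * z + (j - K) * (n * m)) := by
    intro j
    split
    · have := Nat.mul_pos hy hz; omega
    · exact Nat.lt_of_lt_of_le (Nat.mul_pos hn hz) (Nat.le_add_right _ _)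
  rw [qp_mul, qp_mul, inv_prod_one_sub _ _ hE1, inv_prod_one_sub _ _ hE2, map_sub,
    coeff_geo_prod, coeff_geo_prod, sub_nonneg, Nat.cast_le]
  exact key_card_le m n y z K L x hm hn hy hz hco hKL
end

section
/- For any positive integers m, n, y, z with gcd(n,y)=1, and integers K ≥ L ≥ 0, every coefficient in the power series expansion of 1/((q^z;q^m)_K (q^{nyz};q^{nm})_L) − 1/((q^{yz};q^m)_L (q^{nz};q^{nm})_K) is nonnegative. -/
open Finset PowerSeries

namespace DualAux

/-- geometric series `1/(1 - q^a)` -/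
noncomputable def gs (a : ℕ) : PowerSeries ℚ := PowerSeries.mk fun x => if a ∣ x then 1 else 0

/-- `1 + q^u + ... + q^{(n-1)u}` -/
noncomputable def F (n u : ℕ) : PowerSeries ℚ :=
  ∑ ρ ∈ Finset.range n, (PowerSeries.X : PowerSeries ℚ) ^ (ρ * u)

def Nng (f : PowerSeries ℚ) : Prop := ∀ x, 0 ≤ coeff x f

def Dom (f g : PowerSeries ℚ) : Prop := ∀ x, coeff x f ≤ coeff x g

lemma coeff_gs (a x : ℕ) : coeff x (gs a) = if a ∣ x then 1 else 0 := coeff_mk _ _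

lemma nng_gs (a : ℕ) : Nng (gs a) := fun x => by
  rw [coeff_gs]; split <;> norm_num

lemma nng_one : Nng 1 := fun x => by
  rw [coeff_one]; split <;> norm_num

lemma nng_X_pow (k : ℕ) : Nng ((PowerSeries.X : PowerSeries ℚ) ^ k) := fun x => by
  rw [coeff_X_pow]; split <;> norm_num

lemma nng_mul {f g : PowerSeries ℚ} (hf : Nng f) (hg : Nng g) : Nng (f * g) := fun x => by
  rw [coeff_mul]
  exact Finset.sum_nonneg fun p _ => mul_nonneg (hf _) (hg _)

lemma nng_F (n u : ℕ) : Nng (F n u) := fun x => by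
  rw [F, map_sum]
  exact Finset.sum_nonneg fun ρ _ => nng_X_pow _ x

lemma nng_prod {ι : Type*} (s : Finset ι) (f : ι → PowerSeries ℚ)
    (h : ∀ j ∈ s, Nng (f j)) : Nng (∏ j ∈ s, f j) :=
  Finset.prod_induction f Nng (fun _ _ ha hb => nng_mul ha hb) nng_one h

lemma dom_mul {f g f' g' : PowerSeries ℚ} (h : Dom f g) (h' : Dom f' g')
    (hf' : Nng f') (hg : Nng g) : Dom (f * f') (g * g') := fun x => by
  rw [coeff_mul, coeff_mul]
  exact Finset.sum_le_sum fun p _ => mul_le_mul (h p.1) (h' p.2) (hf' p.2) (hg p.1)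

lemma dom_prod {ι : Type*} (s : Finset ι) (f g : ι → PowerSeries ℚ)
    (hf : ∀ j ∈ s, Nng (f j)) (hg : ∀ j ∈ s, Nng (g j))
    (hd : ∀ j ∈ s, Dom (f j) (g j)) : Dom (∏ j ∈ s, f j) (∏ j ∈ s, g j) := by
  classical
  induction s using Finset.cons_induction with
  | empty => exact fun x => le_refl _
  | cons a s ha ih =>
      rw [Finset.prod_cons, Finset.prod_cons]
      exact dom_mul (hd a (Finset.mem_cons_self a s))
        (ih (fun j hj => hf j (Finset.mem_cons_of_mem hj))
            (fun j hj => hg j (Finset.mem_cons_of_mem hj))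
            (fun j hj => hd j (Finset.mem_cons_of_mem hj)))
        (nng_prod _ _ fun j hj => hf j (Finset.mem_cons_of_mem hj))
        (hg a (Finset.mem_cons_self a s))

lemma dom_sum {ι : Type*} (s : Finset ι) (f g : ι → PowerSeries ℚ)
    (h : ∀ j ∈ s, Dom (f j) (g j)) : Dom (∑ j ∈ s, f j) (∑ j ∈ s, g j) := fun x => by
  rw [map_sum, map_sum]
  exact Finset.sum_le_sum fun j hj => h j hj x

lemma mul_gs (a : ℕ) (ha : 0 < a) :
    (1 - (PowerSeries.X : PowerSeries ℚ) ^ a) * gs a = 1 := by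
  apply PowerSeries.ext
  intro x
  rw [sub_mul, one_mul, map_sub, coeff_gs,
    mul_comm ((PowerSeries.X : PowerSeries ℚ) ^ a), coeff_mul_X_pow', coeff_one]
  by_cases hx : a ∣ x
  · by_cases h0 : x = 0
    · subst h0
      rw [if_pos hx, if_neg (by omega : ¬ a ≤ 0), if_pos rfl]
      norm_num
    · have hax : a ≤ x := Nat.le_of_dvd (Nat.pos_of_ne_zero h0) hx
      have hd : a ∣ x - a := Nat.dvd_sub hx dvd_rfl
      rw [if_pos hx, if_pos hax, coeff_gs, if_pos hd, if_neg h0]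
      norm_num
  · have h0 : x ≠ 0 := by rintro rfl; exact hx (dvd_zero a)
    by_cases hax : a ≤ x
    · have hnd : ¬ a ∣ x - a := by
        intro hd
        have := Nat.dvd_add hd (dvd_refl a)
        rw [Nat.sub_add_cancel hax] at this
        exact hx this
      rw [if_neg hx, if_pos hax, coeff_gs, if_neg hnd, if_neg h0]
      norm_num
    · rw [if_neg hx, if_neg hax, if_neg h0]
      norm_num

lemma inv_eq (f h : PowerSeries ℚ) (hfh : f * h = 1) : f⁻¹ = h := by
  have hc : constantCoeff f ≠ 0 := by
    intro h0
    have h1 := congrArg (constantCoeff) hfh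
    rw [map_mul, map_one, h0, zero_mul] at h1
    exact zero_ne_one h1
  calc f⁻¹ = f⁻¹ * (f * h) := by rw [hfh, mul_one]
    _ = (f⁻¹ * f) * h := by ring
    _ = h := by rw [PowerSeries.inv_mul_cancel f hc, one_mul]

lemma qp_gs (c m L : ℕ) (hc : 0 < c) :
    qp c m L * ∏ j ∈ Finset.range L, gs (c + j * m) = 1 := by
  rw [qp, ← Finset.prod_mul_distrib]
  exact Finset.prod_eq_one fun j _ => mul_gs _ (by omega)

lemma gs_factor (n u : ℕ) (hn : 0 < n) (hu : 0 < u) : gs u = F n u * gs (n * u) := by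
  have h1 := mul_gs u hu
  have h2 := mul_gs (n * u) (Nat.mul_pos hn hu)
  have h3 : F n u * (1 - (PowerSeries.X : PowerSeries ℚ) ^ u)
      = 1 - (PowerSeries.X : PowerSeries ℚ) ^ (n * u) := by
    have hg := geom_sum_mul ((PowerSeries.X : PowerSeries ℚ) ^ u) n
    have hF : F n u = ∑ i ∈ Finset.range n, ((PowerSeries.X : PowerSeries ℚ) ^ u) ^ i := by
      rw [F]
      exact Finset.sum_congr rfl fun i _ => by rw [← pow_mul, mul_comm]
    have hp : ((PowerSeries.X : PowerSeries ℚ) ^ u) ^ n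
        = (PowerSeries.X : PowerSeries ℚ) ^ (n * u) := by rw [← pow_mul, mul_comm]
    rw [hF]
    calc (∑ i ∈ Finset.range n, ((PowerSeries.X : PowerSeries ℚ) ^ u) ^ i)
          * (1 - (PowerSeries.X : PowerSeries ℚ) ^ u)
        = -((∑ i ∈ Finset.range n, ((PowerSeries.X : PowerSeries ℚ) ^ u) ^ i)
          * ((PowerSeries.X : PowerSeries ℚ) ^ u - 1)) := by ring
      _ = -(((PowerSeries.X : PowerSeries ℚ) ^ u) ^ n - 1) := by rw [hg]
      _ = 1 - (PowerSeries.X : PowerSeries ℚ) ^ (n * u) := by rw [hp]; ring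
  have key : F n u * gs (n * u) * ((1 - (PowerSeries.X : PowerSeries ℚ) ^ u) * gs u)
      = gs u * ((1 - (PowerSeries.X : PowerSeries ℚ) ^ (n * u)) * gs (n * u)) := by
    rw [← h3]; ring
  rw [h1, h2, mul_one, mul_one] at key
  exact key.symm

lemma dom_mul_X_pow {f g : PowerSeries ℚ} (h : Dom f g) (e : ℕ) :
    Dom (f * (PowerSeries.X : PowerSeries ℚ) ^ e) (g * (PowerSeries.X : PowerSeries ℚ) ^ e) :=
  fun x => by
    rw [coeff_mul_X_pow', coeff_mul_X_pow']
    split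
    · exact h _
    · exact le_refl 0

lemma dom_gs_dvd (a b : ℕ) (h : a ∣ b) : Dom (gs b) (gs a) := fun x => by
  rw [coeff_gs, coeff_gs]
  split_ifs with h1 h2 h2
  · exact le_refl 1
  · exact absurd (h.trans h1) h2
  all_goals norm_num

lemma dom_trans {f g h : PowerSeries ℚ} (h1 : Dom f g) (h2 : Dom g h) : Dom f h :=
  fun x => le_trans (h1 x) (h2 x)

lemma coeff_zero_F (n u : ℕ) (hn : 0 < n) (hu : 0 < u) : coeff 0 (F n u) = 1 := by
  rw [F, map_sum, Finset.sum_eq_single 0]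
  · norm_num
  · intro b _ hb
    rw [coeff_X_pow, if_neg]
    intro h
    have : b * u ≠ 0 := by positivity
    omega
  · intro h
    exact absurd (Finset.mem_range.mpr hn) h

lemma dom_self_mul {P Q : PowerSeries ℚ} (hP : Nng P) (hQ : Nng Q)
    (h1 : (1 : ℚ) ≤ coeff 0 Q) : Dom P (P * Q) := fun x => by
  rw [coeff_mul]
  have hmem : ((x, 0) : ℕ × ℕ) ∈ Finset.HasAntidiagonal.antidiagonal x := Finset.HasAntidiagonal.mem_antidiagonal.mpr (add_zero x)
  have hsingle := Finset.single_le_sum (f := fun p : ℕ × ℕ => coeff p.1 P * coeff p.2 Q)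
    (fun p _ => mul_nonneg (hP _) (hQ _)) hmem
  calc coeff x P ≤ coeff x P * coeff 0 Q := le_mul_of_one_le_right (hP x) h1
    _ ≤ ∑ p ∈ Finset.HasAntidiagonal.antidiagonal x, coeff p.1 P * coeff p.2 Q := hsingle

/-- Key arithmetic lemma: `gs(nz) * F_n(yz) * q^c ⪯ gs(z)` when `z ∣ c` and `gcd(n,y)=1`. -/
lemma key_base (n y z : ℕ) (hn : 0 < n) (hz : 0 < z) (hco : Nat.Coprime n y)
    (c : ℕ) (hc : z ∣ c) :
    Dom (gs (n * z) * F n (y * z) * (PowerSeries.X : PowerSeries ℚ) ^ c) (gs z) := by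
  intro x
  rw [coeff_mul_X_pow']
  split_ifs with hcx
  · set w := x - c with hw
    have hsum : gs (n * z) * F n (y * z)
        = ∑ ρ ∈ Finset.range n, gs (n * z) * (PowerSeries.X : PowerSeries ℚ) ^ (ρ * (y * z)) := by
      rw [F, Finset.mul_sum]
    have hterm : ∀ ρ : ℕ, coeff w (gs (n * z) * (PowerSeries.X : PowerSeries ℚ) ^ (ρ * (y * z)))
        = if ρ * (y * z) ≤ w ∧ n * z ∣ w - ρ * (y * z) then 1 else 0 := by
      intro ρ
      rw [coeff_mul_X_pow', coeff_gs]
      split_ifs with p1 p2 p2 <;> first | rfl | (exfalso; tauto)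
    rw [hsum, map_sum]
    have hrw : (∑ ρ ∈ Finset.range n,
        coeff w (gs (n * z) * (PowerSeries.X : PowerSeries ℚ) ^ (ρ * (y * z))))
        = ((Finset.range n).filter
            (fun ρ => ρ * (y * z) ≤ w ∧ n * z ∣ w - ρ * (y * z))).card := by
      rw [← Finset.sum_boole]
      exact Finset.sum_congr rfl fun ρ _ => hterm ρ
    rw [hrw]
    -- uniqueness of the witness ρ
    have huniq : ∀ a ∈ (Finset.range n).filter
          (fun ρ => ρ * (y * z) ≤ w ∧ n * z ∣ w - ρ * (y * z)),
        ∀ b ∈ (Finset.range n).filter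
          (fun ρ => ρ * (y * z) ≤ w ∧ n * z ∣ w - ρ * (y * z)), a = b := by
      intro a ha b hb
      simp only [Finset.mem_filter, Finset.mem_range] at ha hb
      obtain ⟨han, haw, had⟩ := ha
      obtain ⟨hbn, hbw, hbd⟩ := hb
      have hma : a * (y * z) ≡ w [MOD n * z] := (Nat.modEq_iff_dvd' haw).mpr had
      have hmb : b * (y * z) ≡ w [MOD n * z] := (Nat.modEq_iff_dvd' hbw).mpr hbd
      have hab : a * y * z ≡ b * y * z [MOD n * z] := by
        have := hma.trans hmb.symm
        rwa [← mul_assoc, ← mul_assoc] at this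
      have hab2 : a * y ≡ b * y [MOD n] :=
        Nat.ModEq.mul_right_cancel' (by omega) hab
      have hab3 : a ≡ b [MOD n] := Nat.ModEq.cancel_right_of_coprime hco hab2
      have : a % n = b % n := hab3
      rwa [Nat.mod_eq_of_lt han, Nat.mod_eq_of_lt hbn] at this
    by_cases hzx : z ∣ x
    · rw [coeff_gs, if_pos hzx]
      have hcard : ((Finset.range n).filter
          (fun ρ => ρ * (y * z) ≤ w ∧ n * z ∣ w - ρ * (y * z))).card ≤ 1 :=
        Finset.card_le_one.mpr huniq
      exact_mod_cast hcard
    · rw [coeff_gs, if_neg hzx]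
      have hempty : (Finset.range n).filter
          (fun ρ => ρ * (y * z) ≤ w ∧ n * z ∣ w - ρ * (y * z)) = ∅ := by
        rw [Finset.filter_eq_empty_iff]
        intro ρ _
        intro hP
        apply hzx
        obtain ⟨hle, hdvd⟩ := hP
        have hz1 : z ∣ w - ρ * (y * z) := dvd_trans (dvd_mul_left z n) hdvd
        have hz2 : z ∣ ρ * (y * z) := Dvd.intro (ρ * y) (by ring)
        have hz3 : z ∣ w := by
          have := Nat.dvd_add hz1 hz2
          rwa [Nat.sub_add_cancel hle] at this
        have hx' : x = w + c := by omega
        rw [hx']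
        exact Nat.dvd_add hz3 hc
      rw [hempty]
      norm_num
  · exact nng_gs z x

/-- Core inequality, proved by induction on `L`. -/
lemma core (m n y z : ℕ) (hn : 0 < n) (hy : 0 < y) (hz : 0 < z) (hco : Nat.Coprime n y) :
    ∀ L k, Dom (gs (n * z) * (∏ j ∈ Finset.range (L + 1), F n (y * z + j * m))
        * (PowerSeries.X : PowerSeries ℚ) ^ (k * z))
      (gs z * ∏ j ∈ Finset.range L, F n (z + (j + 1) * m))
  | 0, k => by
    have h := key_base n y z hn hz hco (k * z) (dvd_mul_left z k)
    simpa using h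
  | (L + 1), k => by
    have hdom : ∀ ρ ∈ Finset.range n,
        Dom ((gs (n * z) * (∏ j ∈ Finset.range (L + 1), F n (y * z + j * m))
              * (PowerSeries.X : PowerSeries ℚ) ^ ((k + ρ * (y - 1)) * z))
            * (PowerSeries.X : PowerSeries ℚ) ^ (ρ * (z + (L + 1) * m)))
          ((gs z * ∏ j ∈ Finset.range L, F n (z + (j + 1) * m))
            * (PowerSeries.X : PowerSeries ℚ) ^ (ρ * (z + (L + 1) * m))) :=
      fun ρ _ => dom_mul_X_pow (core m n y z hn hy hz hco L (k + ρ * (y - 1))) _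
    have hs := dom_sum _ _ _ hdom
    have hee : ∀ ρ : ℕ, (k + ρ * (y - 1)) * z + ρ * (z + (L + 1) * m)
        = k * z + ρ * (y * z + (L + 1) * m) := by
      intro ρ
      obtain ⟨y', rfl⟩ : ∃ y', y = y' + 1 := ⟨y - 1, by omega⟩
      simp only [Nat.add_sub_cancel]
      ring
    have eL : (∑ ρ ∈ Finset.range n,
        (gs (n * z) * (∏ j ∈ Finset.range (L + 1), F n (y * z + j * m))
            * (PowerSeries.X : PowerSeries ℚ) ^ ((k + ρ * (y - 1)) * z))
          * (PowerSeries.X : PowerSeries ℚ) ^ (ρ * (z + (L + 1) * m)))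
        = gs (n * z) * (∏ j ∈ Finset.range (L + 2), F n (y * z + j * m))
            * (PowerSeries.X : PowerSeries ℚ) ^ (k * z) := by
      have step1 : ∀ ρ : ℕ,
          (gs (n * z) * (∏ j ∈ Finset.range (L + 1), F n (y * z + j * m))
              * (PowerSeries.X : PowerSeries ℚ) ^ ((k + ρ * (y - 1)) * z))
            * (PowerSeries.X : PowerSeries ℚ) ^ (ρ * (z + (L + 1) * m))
          = gs (n * z) * (∏ j ∈ Finset.range (L + 1), F n (y * z + j * m))
              * (PowerSeries.X : PowerSeries ℚ) ^ (k * z)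
            * (PowerSeries.X : PowerSeries ℚ) ^ (ρ * (y * z + (L + 1) * m)) := by
        intro ρ
        rw [mul_assoc, mul_assoc, mul_assoc, mul_assoc, ← pow_add, ← pow_add, hee ρ, pow_add]
      rw [Finset.sum_congr rfl fun ρ _ => step1 ρ, ← Finset.mul_sum]
      have : (∑ ρ ∈ Finset.range n,
          (PowerSeries.X : PowerSeries ℚ) ^ (ρ * (y * z + (L + 1) * m)))
          = F n (y * z + (L + 1) * m) := by rw [F]
      rw [this]
      conv_rhs => rw [Finset.prod_range_succ]
      ring
    have eR : (∑ ρ ∈ Finset.range n,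
        (gs z * ∏ j ∈ Finset.range L, F n (z + (j + 1) * m))
          * (PowerSeries.X : PowerSeries ℚ) ^ (ρ * (z + (L + 1) * m)))
        = gs z * ∏ j ∈ Finset.range (L + 1), F n (z + (j + 1) * m) := by
      rw [← Finset.mul_sum]
      have : (∑ ρ ∈ Finset.range n,
          (PowerSeries.X : PowerSeries ℚ) ^ (ρ * (z + (L + 1) * m)))
          = F n (z + (L + 1) * m) := by rw [F]
      rw [this]
      conv_rhs => rw [Finset.prod_range_succ]
      ring
    rw [eL, eR] at hs
    exact hs

end DualAux

open DualAux

theorem dual_thm (m n y z K L : ℕ) (hm : 0 < m) (hn : 0 < n) (hy : 0 < y) (hz : 0 < z)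
    (hco : Nat.Coprime n y) (hKL : L ≤ K) (x : ℕ) :
    0 ≤ PowerSeries.coeff x
      ((qp z m K * qp (n * y * z) (n * m) L)⁻¹
        - (qp (y * z) m L * qp (n * z) (n * m) K)⁻¹) := by
  have hMinv : (qp z m K * qp (n * y * z) (n * m) L)⁻¹
      = (∏ j ∈ Finset.range K, gs (z + j * m))
        * ∏ j ∈ Finset.range L, gs (n * y * z + j * (n * m)) := by
    apply inv_eq
    rw [mul_mul_mul_comm, qp_gs _ _ _ hz, qp_gs _ _ _ (by positivity), mul_one]
  have hSinv : (qp (y * z) m L * qp (n * z) (n * m) K)⁻¹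
      = (∏ j ∈ Finset.range L, gs (y * z + j * m))
        * ∏ j ∈ Finset.range K, gs (n * z + j * (n * m)) := by
    apply inv_eq
    rw [mul_mul_mul_comm, qp_gs _ _ _ (by positivity), qp_gs _ _ _ (by positivity), mul_one]
  rw [hMinv, hSinv, map_sub, sub_nonneg]
  suffices h : Dom ((∏ j ∈ Finset.range L, gs (y * z + j * m))
        * ∏ j ∈ Finset.range K, gs (n * z + j * (n * m)))
      ((∏ j ∈ Finset.range K, gs (z + j * m))
        * ∏ j ∈ Finset.range L, gs (n * y * z + j * (n * m))) from h x
  cases L with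
  | zero =>
      simp only [Finset.range_zero, Finset.prod_empty, one_mul, mul_one]
      exact dom_prod _ _ _ (fun j _ => nng_gs _) (fun j _ => nng_gs _)
        (fun j _ => dom_gs_dvd _ _ ⟨n, by ring⟩)
  | succ L' =>
      obtain ⟨K', rfl⟩ : ∃ K', K = K' + 1 := ⟨K - 1, by omega⟩
      have hK' : L' ≤ K' := by omega
      -- product rewrites
      have hA : ∏ j ∈ Finset.range (L' + 1), gs (y * z + j * m)
          = (∏ j ∈ Finset.range (L' + 1), F n (y * z + j * m))
            * ∏ j ∈ Finset.range (L' + 1), gs (n * (y * z + j * m)) := by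
        rw [← Finset.prod_mul_distrib]
        exact Finset.prod_congr rfl fun j _ => gs_factor n _ hn (by positivity)
      have hB : ∏ j ∈ Finset.range (K' + 1), gs (n * z + j * (n * m))
          = gs (n * z) * ∏ j ∈ Finset.range K', gs (n * (z + (j + 1) * m)) := by
        rw [Finset.prod_range_succ']
        rw [mul_comm]
        congr 1
        · exact congrArg gs (by ring)
        · exact Finset.prod_congr rfl fun j _ => congrArg gs (by ring)
      have hC : ∏ j ∈ Finset.range (K' + 1), gs (z + j * m)
          = gs z * ((∏ j ∈ Finset.range K', F n (z + (j + 1) * m))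
            * ∏ j ∈ Finset.range K', gs (n * (z + (j + 1) * m))) := by
        rw [Finset.prod_range_succ']
        rw [mul_comm]
        congr 1
        · exact congrArg gs (by ring)
        · rw [← Finset.prod_mul_distrib]
          exact Finset.prod_congr rfl fun j _ => gs_factor n _ hn (by positivity)
      have hD : ∏ j ∈ Finset.range (L' + 1), gs (n * y * z + j * (n * m))
          = ∏ j ∈ Finset.range (L' + 1), gs (n * (y * z + j * m)) :=
        Finset.prod_congr rfl fun j _ => congrArg gs (by ring)
      set CC := (∏ j ∈ Finset.range (L' + 1), gs (n * (y * z + j * m)))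
        * ∏ j ∈ Finset.range K', gs (n * (z + (j + 1) * m)) with hCC
      have e1 : (∏ j ∈ Finset.range (L' + 1), gs (y * z + j * m))
          * ∏ j ∈ Finset.range (K' + 1), gs (n * z + j * (n * m))
          = (gs (n * z) * ∏ j ∈ Finset.range (L' + 1), F n (y * z + j * m)) * CC := by
        rw [hA, hB, hCC]; ring
      have e2 : (∏ j ∈ Finset.range (K' + 1), gs (z + j * m))
          * ∏ j ∈ Finset.range (L' + 1), gs (n * y * z + j * (n * m))
          = (gs z * ∏ j ∈ Finset.range K', F n (z + (j + 1) * m)) * CC := by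
        rw [hC, hD, hCC]; ring
      rw [e1, e2]
      have hnngCC : Nng CC := nng_mul (nng_prod _ _ fun j _ => nng_gs _)
        (nng_prod _ _ fun j _ => nng_gs _)
      apply dom_mul _ (fun x => le_refl _) hnngCC
        (nng_mul (nng_gs _) (nng_prod _ _ fun j _ => nng_F _ _))
      -- core inequality extended from L' to K'
      have hcore : Dom (gs (n * z) * ∏ j ∈ Finset.range (L' + 1), F n (y * z + j * m))
          (gs z * ∏ j ∈ Finset.range L', F n (z + (j + 1) * m)) := by
        have h := core m n y z hn hy hz hco L' 0
        simpa using h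
      have hsplit : ∏ j ∈ Finset.range K', F n (z + (j + 1) * m)
          = (∏ j ∈ Finset.range L', F n (z + (j + 1) * m))
            * ∏ j ∈ Finset.range (K' - L'), F n (z + (L' + j + 1) * m) := by
        rw [show K' = L' + (K' - L') by omega, Finset.prod_range_add]
        congr 1
        rw [show L' + (K' - L') - L' = K' - L' by omega]
      refine dom_trans hcore ?_
      rw [hsplit, ← mul_assoc]
      apply dom_self_mul (nng_mul (nng_gs _) (nng_prod _ _ fun j _ => nng_F _ _))
        (nng_prod _ _ fun j _ => nng_F _ _)
      rw [PowerSeries.coeff_zero_eq_constantCoeff, map_prod]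
      have : ∀ j ∈ Finset.range (K' - L'),
          constantCoeff (F n (z + (L' + j + 1) * m)) = 1 := by
        intro j _
        rw [← PowerSeries.coeff_zero_eq_constantCoeff_apply]
        exact coeff_zero_F _ _ hn (by positivity)
      rw [Finset.prod_congr rfl this, Finset.prod_const_one]
end

section
/- For any positive integers m, n, y, z with gcd(n,y)=1; integers K ≥ L ≥ 0; and integers S, T with max(S,T) ≤ K and 0 ≤ min(S,T) ≤ L, every coefficient in the power series expansion of 1/((q^z;q^m)_K (q^{nyz};q^{nm})_L) − 1/((q^{yz};q^m)_S (q^{nz};q^{nm})_T) is nonnegative. -/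
open Finset PowerSeries

namespace BUaux

noncomputable def geom (a : ℕ) : PowerSeries ℚ :=
  PowerSeries.mk fun x => if a ∣ x then 1 else 0

lemma coeff_geom (a x : ℕ) :
    PowerSeries.coeff (R := ℚ) x (geom a) = if a ∣ x then 1 else 0 :=
  PowerSeries.coeff_mk _ _

lemma one_sub_mul_geom (a : ℕ) (ha : 0 < a) :
    ((1 : PowerSeries ℚ) - X ^ a) * geom a = 1 := by
  ext d
  rw [sub_mul, one_mul, map_sub, PowerSeries.coeff_X_pow_mul', coeff_geom,
    PowerSeries.coeff_one]
  by_cases h2 : a ≤ d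
  · have hd0 : d ≠ 0 := by omega
    rw [if_pos h2, coeff_geom, if_neg hd0]
    have hiff : a ∣ d ↔ a ∣ d - a := by
      constructor
      · exact fun h => Nat.dvd_sub h dvd_rfl
      · intro h
        have := Nat.dvd_add h (dvd_refl a)
        rwa [Nat.sub_add_cancel h2] at this
    by_cases h : a ∣ d
    · rw [if_pos h, if_pos (hiff.1 h), sub_self]
    · rw [if_neg h, if_neg (fun hh => h (hiff.2 hh)), sub_self]
  · rw [if_neg h2, sub_zero]
    by_cases hd : d = 0
    · subst hd; simp
    · rw [if_neg hd, if_neg (fun h => hd (Nat.eq_zero_of_dvd_of_lt h (by omega)))]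

lemma prod_inv {ι : Type} [DecidableEq ι] (s : Finset ι) (e : ι → ℕ)
    (he : ∀ i ∈ s, 0 < e i) :
    (∏ i ∈ s, ((1 : PowerSeries ℚ) - X ^ e i))⁻¹ = ∏ i ∈ s, geom (e i) := by
  symm
  rw [PowerSeries.eq_inv_iff_mul_eq_one]
  · rw [← Finset.prod_mul_distrib]
    exact Finset.prod_eq_one fun i hi => by
      rw [mul_comm]; exact one_sub_mul_geom _ (he i hi)
  · rw [map_prod]
    rw [Finset.prod_eq_one fun i hi => ?_]
    · exact one_ne_zero
    · rw [map_sub, map_one, map_pow, PowerSeries.constantCoeff_X,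
        zero_pow (he i hi).ne', sub_zero]

lemma coeff_prod_geom {ι : Type} [DecidableEq ι] (s : Finset ι) (e : ι → ℕ) (x : ℕ) :
    PowerSeries.coeff (R := ℚ) x (∏ i ∈ s, geom (e i)) =
      ((s.finsuppAntidiag x).filter fun l => ∀ i ∈ s, e i ∣ l i).card := by
  rw [PowerSeries.coeff_prod]
  rw [show (∑ l ∈ s.finsuppAntidiag x, ∏ i ∈ s, PowerSeries.coeff (R := ℚ) (l i) (geom (e i)))
      = ∑ l ∈ s.finsuppAntidiag x, if (∀ i ∈ s, e i ∣ l i) then (1:ℚ) else 0 from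
    Finset.sum_congr rfl fun l _ => by
      rw [Finset.prod_congr rfl fun i _ => coeff_geom (e i) (l i), Finset.prod_boole]]
  rw [Finset.sum_boole]

/-! ### the combinatorial data -/

def aa (z m j : ℕ) : ℕ := z + j * m
def bb (y z m j : ℕ) : ℕ := y * z + j * m

def mu (y z m : ℕ) (l : ℕ ⊕ ℕ →₀ ℕ) (j : ℕ) : ℕ := l (Sum.inl j) / bb y z m j
def tau (n z m : ℕ) (l : ℕ ⊕ ℕ →₀ ℕ) (j : ℕ) : ℕ := l (Sum.inr j) / (n * aa z m j)
def rr (n y z m L : ℕ) (l : ℕ ⊕ ℕ →₀ ℕ) (j : ℕ) : ℕ :=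
  if j < L then mu y z m l j % n else mu y z m l j
def qq (n y z m L : ℕ) (l : ℕ ⊕ ℕ →₀ ℕ) (j : ℕ) : ℕ :=
  if j < L then mu y z m l j / n else 0

lemma mu_eq_qq_rr (n y z m L : ℕ) (l : ℕ ⊕ ℕ →₀ ℕ) (j : ℕ) :
    mu y z m l j = n * qq n y z m L l j + rr n y z m L l j := by
  unfold qq rr
  by_cases h : j < L
  · rw [if_pos h, if_pos h, Nat.div_add_mod]
  · rw [if_neg h, if_neg h, mul_zero, zero_add]

lemma rr_lt (n y z m L : ℕ) (hn : 0 < n) (l : ℕ ⊕ ℕ →₀ ℕ) {j : ℕ} (hj : j < L) :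
    rr n y z m L l j < n := by
  rw [rr, if_pos hj]; exact Nat.mod_lt _ hn

lemma qq_eq_zero (n y z m L : ℕ) (l : ℕ ⊕ ℕ →₀ ℕ) {j : ℕ} (hj : L ≤ j) :
    qq n y z m L l j = 0 := by
  rw [qq, if_neg (by omega)]

lemma rr_eq_zero (n y z m L : ℕ) (l : ℕ ⊕ ℕ →₀ ℕ) {j : ℕ}
    (h : mu y z m l j = 0) : rr n y z m L l j = 0 := by
  unfold rr
  by_cases hj : j < L
  · rw [if_pos hj, h]; simp
  · rw [if_neg hj, h]

def phiFun (m n y z K L : ℕ) (l : ℕ ⊕ ℕ →₀ ℕ) : ℕ ⊕ ℕ → ℕ :=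
  Sum.elim
    (fun j => if j < K then
        (if j = 0 then
          (y * rr n y z m L l 0 + n * tau n z m l 0
            + (y - 1) * ∑ i ∈ Finset.Ico 1 K, rr n y z m L l i) * z
        else (rr n y z m L l j + n * tau n z m l j) * aa z m j)
      else 0)
    (fun j => (n * qq n y z m L l j) * bb y z m j)

noncomputable def Phi (m n y z K L : ℕ) (l : ℕ ⊕ ℕ →₀ ℕ) : ℕ ⊕ ℕ →₀ ℕ :=
  Finsupp.onFinset ((range K).disjSum (range L)) (phiFun m n y z K L l) (by
    intro i hi
    match i with
    | Sum.inl j =>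
      simp only [phiFun, Sum.elim_inl] at hi
      rw [Finset.inl_mem_disjSum, Finset.mem_range]
      by_contra h
      exact hi (if_neg h)
    | Sum.inr j =>
      simp only [phiFun, Sum.elim_inr] at hi
      rw [Finset.inr_mem_disjSum, Finset.mem_range]
      by_contra h
      apply hi
      rw [qq, if_neg h]
      simp)

lemma Phi_apply (m n y z K L : ℕ) (l : ℕ ⊕ ℕ →₀ ℕ) (i : ℕ ⊕ ℕ) :
    Phi m n y z K L l i = phiFun m n y z K L l i := rfl


lemma B_facts (m n y z S T x : ℕ) (hy : 0 < y) (hz : 0 < z) (hn : 0 < n)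
    (l : ℕ ⊕ ℕ →₀ ℕ)
    (hl : l ∈ (((range S).disjSum (range T)).finsuppAntidiag x).filter
      fun l => ∀ i ∈ (range S).disjSum (range T),
        Sum.elim (fun j => bb y z m j) (fun j => n * aa z m j) i ∣ l i) :
    (∀ j, l (Sum.inl j) = mu y z m l j * bb y z m j) ∧
    (∀ j, l (Sum.inr j) = tau n z m l j * (n * aa z m j)) ∧
    (∀ j, S ≤ j → mu y z m l j = 0) ∧
    (∀ j, T ≤ j → tau n z m l j = 0) ∧
    (∑ j ∈ range S, l (Sum.inl j)) + (∑ j ∈ range T, l (Sum.inr j)) = x := by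
  rw [Finset.mem_filter, Finset.mem_finsuppAntidiag] at hl
  obtain ⟨⟨hsum, hsupp⟩, hdvd⟩ := hl
  have hin : ∀ j, S ≤ j → l (Sum.inl j) = 0 := by
    intro j hj
    by_contra h
    have := hsupp (Finsupp.mem_support_iff.2 h)
    rw [Finset.inl_mem_disjSum, Finset.mem_range] at this
    omega
  have hir : ∀ j, T ≤ j → l (Sum.inr j) = 0 := by
    intro j hj
    by_contra h
    have := hsupp (Finsupp.mem_support_iff.2 h)
    rw [Finset.inr_mem_disjSum, Finset.mem_range] at this
    omega
  refine ⟨?_, ?_, ?_, ?_, ?_⟩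
  · intro j
    by_cases hj : j < S
    · have hd := hdvd (Sum.inl j) (by rw [Finset.inl_mem_disjSum, Finset.mem_range]; exact hj)
      simp only [Sum.elim_inl] at hd
      exact (Nat.div_mul_cancel hd).symm
    · rw [hin j (by omega)]
      rw [mu, hin j (by omega), Nat.zero_div, zero_mul]
  · intro j
    by_cases hj : j < T
    · have hd := hdvd (Sum.inr j) (by rw [Finset.inr_mem_disjSum, Finset.mem_range]; exact hj)
      simp only [Sum.elim_inr] at hd
      exact (Nat.div_mul_cancel hd).symm
    · rw [hir j (by omega)]
      rw [tau, hir j (by omega), Nat.zero_div, zero_mul]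
  · intro j hj; rw [mu, hin j hj, Nat.zero_div]
  · intro j hj; rw [tau, hir j hj, Nat.zero_div]
  · rw [← hsum, Finset.sum_disjSum]

lemma Phi_mem (m n y z K L S T x : ℕ) (hm : 0 < m) (hn : 0 < n) (hy : 0 < y) (hz : 0 < z)
    (hKL : L ≤ K) (hSK : S ≤ K) (hTK : T ≤ K) (hK : 0 < K)
    (l : ℕ ⊕ ℕ →₀ ℕ)
    (hl : l ∈ (((range S).disjSum (range T)).finsuppAntidiag x).filter
      fun l => ∀ i ∈ (range S).disjSum (range T),
        Sum.elim (fun j => bb y z m j) (fun j => n * aa z m j) i ∣ l i) :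
    Phi m n y z K L l ∈ (((range K).disjSum (range L)).finsuppAntidiag x).filter
      fun l => ∀ i ∈ (range K).disjSum (range L),
        Sum.elim (fun j => aa z m j) (fun j => n * bb y z m j) i ∣ l i := by
  obtain ⟨F1, F2, F3, F4, hsum⟩ := B_facts m n y z S T x hy hz hn l hl
  rw [Finset.mem_filter, Finset.mem_finsuppAntidiag]
  refine ⟨⟨?_, Finsupp.support_onFinset_subset⟩, ?_⟩
  · -- the sum is preserved
    rw [Finset.sum_disjSum]
    have hrange : range K = insert 0 (Finset.Ico 1 K) := by
      ext j; simp [Finset.mem_Ico]; omega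
    have h1 : ∑ j ∈ range K, Phi m n y z K L l (Sum.inl j)
        = (y * rr n y z m L l 0 + n * tau n z m l 0
            + (y - 1) * ∑ i ∈ Finset.Ico 1 K, rr n y z m L l i) * z
          + ∑ j ∈ Finset.Ico 1 K, (rr n y z m L l j + n * tau n z m l j) * aa z m j := by
      rw [hrange, Finset.sum_insert (by simp)]
      congr 1
      · rw [Phi_apply]
        simp [phiFun, hK]
      · refine Finset.sum_congr rfl fun j hj => ?_
        rw [Finset.mem_Ico] at hj
        rw [Phi_apply]
        simp only [phiFun, Sum.elim_inl, if_pos hj.2, if_neg (by omega : ¬ j = 0)]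
    have h2 : ∑ j ∈ range L, Phi m n y z K L l (Sum.inr j)
        = ∑ j ∈ range L, (n * qq n y z m L l j) * bb y z m j :=
      Finset.sum_congr rfl fun j _ => rfl
    rw [h1, h2, ← hsum]
    have hxl : ∑ j ∈ range S, l (Sum.inl j)
        = ∑ j ∈ range K, mu y z m l j * bb y z m j := by
      rw [Finset.sum_congr rfl fun j _ => F1 j]
      exact Finset.sum_subset (Finset.range_subset_range.2 hSK)
        (fun j _ hj => by rw [F3 j (by simpa using hj), zero_mul])
    have hxr : ∑ j ∈ range T, l (Sum.inr j)
        = ∑ j ∈ range K, tau n z m l j * (n * aa z m j) := by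
      rw [Finset.sum_congr rfl fun j _ => F2 j]
      exact Finset.sum_subset (Finset.range_subset_range.2 hTK)
        (fun j _ hj => by rw [F4 j (by simpa using hj), zero_mul])
    rw [hxl, hxr]
    have hmusum : ∑ j ∈ range K, mu y z m l j * bb y z m j
        = ∑ j ∈ range K, (n * qq n y z m L l j * bb y z m j
            + rr n y z m L l j * bb y z m j) :=
      Finset.sum_congr rfl fun j _ => by rw [mu_eq_qq_rr n y z m L l j, add_mul]
    rw [hmusum, Finset.sum_add_distrib]
    have hq : ∑ j ∈ range K, n * qq n y z m L l j * bb y z m j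
        = ∑ j ∈ range L, n * qq n y z m L l j * bb y z m j :=
      (Finset.sum_subset (Finset.range_subset_range.2 hKL)
        (fun j _ hj => by
          rw [qq_eq_zero n y z m L l (by simpa using hj), mul_zero, zero_mul])).symm
    rw [hq]
    have hsplit1 : ∑ j ∈ range K, rr n y z m L l j * bb y z m j
        = rr n y z m L l 0 * bb y z m 0
          + ∑ j ∈ Finset.Ico 1 K, rr n y z m L l j * bb y z m j := by
      rw [hrange, Finset.sum_insert (by simp)]
    have hsplit2 : ∑ j ∈ range K, tau n z m l j * (n * aa z m j)
        = tau n z m l 0 * (n * aa z m 0)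
          + ∑ j ∈ Finset.Ico 1 K, tau n z m l j * (n * aa z m j) := by
      rw [hrange, Finset.sum_insert (by simp)]
    rw [hsplit1, hsplit2]
    obtain ⟨y', rfl⟩ : ∃ y', y = y' + 1 := ⟨y - 1, by omega⟩
    have hcomb : ∑ j ∈ Finset.Ico 1 K, rr n (y'+1) z m L l j * bb (y'+1) z m j
        + ∑ j ∈ Finset.Ico 1 K, tau n z m l j * (n * aa z m j)
        = ∑ j ∈ Finset.Ico 1 K, (rr n (y'+1) z m L l j + n * tau n z m l j) * aa z m j
          + y' * (∑ i ∈ Finset.Ico 1 K, rr n (y'+1) z m L l i) * z := by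
      rw [← Finset.sum_add_distrib]
      rw [show y' * (∑ i ∈ Finset.Ico 1 K, rr n (y'+1) z m L l i) * z
          = ∑ j ∈ Finset.Ico 1 K, y' * rr n (y'+1) z m L l j * z from by
        rw [Finset.mul_sum, Finset.sum_mul]]
      rw [← Finset.sum_add_distrib]
      refine Finset.sum_congr rfl fun j _ => ?_
      simp only [aa, bb]
      ring
    have hE0 : ((y'+1) * rr n (y'+1) z m L l 0 + n * tau n z m l 0
          + ((y'+1) - 1) * ∑ i ∈ Finset.Ico 1 K, rr n (y'+1) z m L l i) * z
        = rr n (y'+1) z m L l 0 * bb (y'+1) z m 0 + tau n z m l 0 * (n * aa z m 0)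
          + y' * (∑ i ∈ Finset.Ico 1 K, rr n (y'+1) z m L l i) * z := by
      simp only [aa, bb, Nat.add_sub_cancel]
      ring
    rw [hE0]
    linarith [hcomb]
  · -- divisibility
    intro i hi
    match i with
    | Sum.inl j =>
      rw [Finset.inl_mem_disjSum, Finset.mem_range] at hi
      rw [Phi_apply]
      simp only [phiFun, Sum.elim_inl, if_pos hi]
      by_cases hj : j = 0
      · subst hj
        rw [if_pos rfl]
        have : aa z m 0 = z := by simp [aa]
        rw [this]
        exact dvd_mul_left z _
      · rw [if_neg hj]
        exact dvd_mul_left _ _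
    | Sum.inr j =>
      rw [Phi_apply]
      simp only [phiFun, Sum.elim_inr]
      exact ⟨qq n y z m L l j, by ring⟩

lemma card_le (m n y z K L S T x : ℕ) (hm : 0 < m) (hn : 0 < n) (hy : 0 < y) (hz : 0 < z)
    (hco : Nat.Coprime n y) (hKL : L ≤ K) (hSK : S ≤ K) (hTK : T ≤ K)
    (hOR : S ≤ L ∨ T ≤ L) (hK : 0 < K) :
    ((((range S).disjSum (range T)).finsuppAntidiag x).filter
      (fun l => ∀ i ∈ (range S).disjSum (range T),
        Sum.elim (fun j => bb y z m j) (fun j => n * aa z m j) i ∣ l i)).card ≤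
    ((((range K).disjSum (range L)).finsuppAntidiag x).filter
      (fun l => ∀ i ∈ (range K).disjSum (range L),
        Sum.elim (fun j => aa z m j) (fun j => n * bb y z m j) i ∣ l i)).card := by
  apply Finset.card_le_card_of_injOn (Phi m n y z K L)
  · intro l hl
    exact Phi_mem m n y z K L S T x hm hn hy hz hKL hSK hTK hK l hl
  · intro l₁ h₁ l₂ h₂ heq
    simp only [Finset.mem_coe] at h₁ h₂
    obtain ⟨F1₁, F2₁, F3₁, F4₁, -⟩ := B_facts m n y z S T x hy hz hn l₁ h₁
    obtain ⟨F1₂, F2₂, F3₂, F4₂, -⟩ := B_facts m n y z S T x hy hz hn l₂ h₂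
    have happ : ∀ i, phiFun m n y z K L l₁ i = phiFun m n y z K L l₂ i := fun i => by
      have := DFunLike.congr_fun heq i
      rwa [Phi_apply, Phi_apply] at this
    have hbb : ∀ j, 0 < bb y z m j := fun j => by
      have := Nat.mul_pos hy hz
      unfold bb; omega
    have haa : ∀ j, 0 < aa z m j := fun j => by unfold aa; omega
    have hmuz₁ : ∀ j, S ≤ j → rr n y z m L l₁ j = 0 :=
      fun j hj => rr_eq_zero _ _ _ _ _ _ (F3₁ j hj)
    have hmuz₂ : ∀ j, S ≤ j → rr n y z m L l₂ j = 0 :=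
      fun j hj => rr_eq_zero _ _ _ _ _ _ (F3₂ j hj)
    have hqq : ∀ j, qq n y z m L l₁ j = qq n y z m L l₂ j := by
      intro j
      by_cases hj : j < L
      · have h := happ (Sum.inr j)
        simp only [phiFun, Sum.elim_inr] at h
        exact Nat.eq_of_mul_eq_mul_left hn (Nat.eq_of_mul_eq_mul_right (hbb j) h)
      · rw [qq_eq_zero n y z m L l₁ (by omega), qq_eq_zero n y z m L l₂ (by omega)]
    have hsum_eq : ∀ j, 1 ≤ j →
        rr n y z m L l₁ j + n * tau n z m l₁ j = rr n y z m L l₂ j + n * tau n z m l₂ j := by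
      intro j hj
      by_cases hjK : j < K
      · have h := happ (Sum.inl j)
        simp only [phiFun, Sum.elim_inl, if_pos hjK, if_neg (by omega : ¬ j = 0)] at h
        exact Nat.eq_of_mul_eq_mul_right (haa j) h
      · rw [hmuz₁ j (by omega), hmuz₂ j (by omega), F4₁ j (by omega), F4₂ j (by omega)]
    have hrt : ∀ j, 1 ≤ j →
        rr n y z m L l₁ j = rr n y z m L l₂ j ∧ tau n z m l₁ j = tau n z m l₂ j := by
      intro j hj
      have h := hsum_eq j hj
      by_cases hjL : j < L
      · have h1 := rr_lt n y z m L hn l₁ hjL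
        have h2 := rr_lt n y z m L hn l₂ hjL
        have hr : rr n y z m L l₁ j = rr n y z m L l₂ j := by
          have hmod := congrArg (· % n) h
          rwa [Nat.add_mul_mod_self_left, Nat.add_mul_mod_self_left,
            Nat.mod_eq_of_lt h1, Nat.mod_eq_of_lt h2] at hmod
        refine ⟨hr, ?_⟩
        rw [hr] at h
        exact Nat.eq_of_mul_eq_mul_left hn (Nat.add_left_cancel h)
      · rcases hOR with hSL | hTL
        · have hr1 : rr n y z m L l₁ j = 0 := hmuz₁ j (by omega)
          have hr2 : rr n y z m L l₂ j = 0 := hmuz₂ j (by omega)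
          rw [hr1, hr2, zero_add, zero_add] at h
          exact ⟨by rw [hr1, hr2], Nat.eq_of_mul_eq_mul_left hn h⟩
        · have ht1 : tau n z m l₁ j = 0 := F4₁ j (by omega)
          have ht2 : tau n z m l₂ j = 0 := F4₂ j (by omega)
          rw [ht1, ht2, mul_zero, add_zero, add_zero] at h
          exact ⟨h, by rw [ht1, ht2]⟩
    have h0 := happ (Sum.inl 0)
    simp only [phiFun, Sum.elim_inl] at h0
    rw [if_pos hK, if_pos hK] at h0
    simp only [if_true] at h0
    have hRsum : ∑ i ∈ Finset.Ico 1 K, rr n y z m L l₁ i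
        = ∑ i ∈ Finset.Ico 1 K, rr n y z m L l₂ i :=
      Finset.sum_congr rfl fun j hj => (hrt j (Finset.mem_Ico.1 hj).1).1
    rw [hRsum] at h0
    have h0' : y * rr n y z m L l₁ 0 + n * tau n z m l₁ 0
        = y * rr n y z m L l₂ 0 + n * tau n z m l₂ 0 :=
      Nat.add_right_cancel (Nat.eq_of_mul_eq_mul_right hz h0)
    have hr0 : rr n y z m L l₁ 0 = rr n y z m L l₂ 0 ∧ tau n z m l₁ 0 = tau n z m l₂ 0 := by
      by_cases hL : 0 < L
      · have h1 := rr_lt n y z m L hn l₁ hL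
        have h2 := rr_lt n y z m L hn l₂ hL
        have hmod := congrArg (· % n) h0'
        rw [Nat.add_mul_mod_self_left, Nat.add_mul_mod_self_left] at hmod
        have hmodeq : rr n y z m L l₁ 0 ≡ rr n y z m L l₂ 0 [MOD n] :=
          Nat.ModEq.cancel_left_of_coprime hco hmod
        have hr : rr n y z m L l₁ 0 = rr n y z m L l₂ 0 := by
          have := hmodeq
          unfold Nat.ModEq at this
          rwa [Nat.mod_eq_of_lt h1, Nat.mod_eq_of_lt h2] at this
        refine ⟨hr, ?_⟩
        rw [hr] at h0'
        exact Nat.eq_of_mul_eq_mul_left hn (Nat.add_left_cancel h0')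
      · rcases hOR with hSL | hTL
        · have hr1 : rr n y z m L l₁ 0 = 0 := hmuz₁ 0 (by omega)
          have hr2 : rr n y z m L l₂ 0 = 0 := hmuz₂ 0 (by omega)
          rw [hr1, hr2, mul_zero, zero_add, zero_add] at h0'
          exact ⟨by rw [hr1, hr2], Nat.eq_of_mul_eq_mul_left hn h0'⟩
        · have ht1 : tau n z m l₁ 0 = 0 := F4₁ 0 (by omega)
          have ht2 : tau n z m l₂ 0 = 0 := F4₂ 0 (by omega)
          rw [ht1, ht2, mul_zero, add_zero, add_zero] at h0'
          exact ⟨Nat.eq_of_mul_eq_mul_left hy h0', by rw [ht1, ht2]⟩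
    have hrall : ∀ j, rr n y z m L l₁ j = rr n y z m L l₂ j := by
      intro j
      rcases Nat.eq_zero_or_pos j with rfl | hj
      · exact hr0.1
      · exact (hrt j hj).1
    have htall : ∀ j, tau n z m l₁ j = tau n z m l₂ j := by
      intro j
      rcases Nat.eq_zero_or_pos j with rfl | hj
      · exact hr0.2
      · exact (hrt j hj).2
    apply Finsupp.ext
    intro i
    match i with
    | Sum.inl j =>
      rw [F1₁ j, F1₂ j, mu_eq_qq_rr n y z m L l₁ j, mu_eq_qq_rr n y z m L l₂ j,
        hqq j, hrall j]
    | Sum.inr j =>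
      rw [F2₁ j, F2₂ j, htall j]

end BUaux

theorem gen_thm (m n y z K L S T : ℕ) (hm : 0 < m) (hn : 0 < n) (hy : 0 < y) (hz : 0 < z)
    (hco : Nat.Coprime n y) (hKL : L ≤ K)
    (hST : max S T ≤ K) (hmin : min S T ≤ L) (x : ℕ) :
    0 ≤ PowerSeries.coeff (R := ℚ) x
      ((qp z m K * qp (n * y * z) (n * m) L)⁻¹
        - (qp (y * z) m S * qp (n * z) (n * m) T)⁻¹) := by
  have hSK : S ≤ K := le_trans (le_max_left S T) hST
  have hTK : T ≤ K := le_trans (le_max_right S T) hST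
  have hOR : S ≤ L ∨ T ≤ L := by omega
  rcases Nat.eq_zero_or_pos K with rfl | hK
  · have hS : S = 0 := by omega
    have hT : T = 0 := by omega
    have hL : L = 0 := by omega
    subst hS; subst hT; subst hL
    simp [qp]
  · have posA : ∀ i ∈ (range K).disjSum (range L), 0 <
        Sum.elim (fun j => BUaux.aa z m j) (fun j => n * BUaux.bb y z m j) i := by
      intro i _
      match i with
      | Sum.inl j => simp only [Sum.elim_inl]; unfold BUaux.aa; omega
      | Sum.inr j =>
        simp only [Sum.elim_inr]
        have h1 := Nat.mul_pos hy hz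
        have : 0 < BUaux.bb y z m j := by unfold BUaux.bb; omega
        exact Nat.mul_pos hn this
    have posB : ∀ i ∈ (range S).disjSum (range T), 0 <
        Sum.elim (fun j => BUaux.bb y z m j) (fun j => n * BUaux.aa z m j) i := by
      intro i _
      match i with
      | Sum.inl j =>
        simp only [Sum.elim_inl]
        have h1 := Nat.mul_pos hy hz
        unfold BUaux.bb; omega
      | Sum.inr j =>
        simp only [Sum.elim_inr]
        have : 0 < BUaux.aa z m j := by unfold BUaux.aa; omega
        exact Nat.mul_pos hn this
    have hprodA : qp z m K * qp (n * y * z) (n * m) L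
        = ∏ i ∈ (range K).disjSum (range L),
            ((1 : PowerSeries ℚ)
              - X ^ (Sum.elim (fun j => BUaux.aa z m j) (fun j => n * BUaux.bb y z m j) i)) := by
      rw [Finset.prod_disjSum]
      unfold qp
      refine congrArg₂ (· * ·) (Finset.prod_congr rfl fun j _ => rfl)
        (Finset.prod_congr rfl fun j _ => ?_)
      have h : n * y * z + j * (n * m) = Sum.elim (fun j => BUaux.aa z m j)
          (fun j => n * BUaux.bb y z m j) (Sum.inr j) := by
        simp only [Sum.elim_inr, BUaux.bb]
        ring
      rw [h]
    have hprodB : qp (y * z) m S * qp (n * z) (n * m) T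
        = ∏ i ∈ (range S).disjSum (range T),
            ((1 : PowerSeries ℚ)
              - X ^ (Sum.elim (fun j => BUaux.bb y z m j) (fun j => n * BUaux.aa z m j) i)) := by
      rw [Finset.prod_disjSum]
      unfold qp
      refine congrArg₂ (· * ·) (Finset.prod_congr rfl fun j _ => rfl)
        (Finset.prod_congr rfl fun j _ => ?_)
      have h : n * z + j * (n * m) = Sum.elim (fun j => BUaux.bb y z m j)
          (fun j => n * BUaux.aa z m j) (Sum.inr j) := by
        simp only [Sum.elim_inr, BUaux.aa]
        ring
      rw [h]
    rw [hprodA, hprodB, BUaux.prod_inv _ _ posA, BUaux.prod_inv _ _ posB, map_sub,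
      sub_nonneg, BUaux.coeff_prod_geom, BUaux.coeff_prod_geom]
    exact_mod_cast BUaux.card_le m n y z K L S T x hm hn hy hz hco hKL hSK hTK hOR hK
end

section
/- For every positive integer x, the number of partitions of x into parts from the multiset {3, 7, 11, 36, 48} is greater than or equal to the number of partitions of x into parts from the multiset {9, 12, 16, 20, 21}. -/
namespace Parts37

/-- Target multiset built from the multiplicities of 9,12,16,20,21. -/
def tgt (a b c d e : ℕ) : Multiset ℕ :=
  Multiset.replicate (3*(a%4) + 4*b + 3*(c%3) + 3*d) 3 +
  Multiset.replicate (c%3 + 3*e) 7 +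
  Multiset.replicate d 11 +
  Multiset.replicate (a/4) 36 +
  Multiset.replicate (c/3) 48

lemma tgt_sum (a b c d e : ℕ) :
    (tgt a b c d e).sum = 9*a + 12*b + 16*c + 20*d + 21*e := by
  simp [tgt, Multiset.sum_replicate, smul_eq_mul]
  omega

lemma tgt_mem {a b c d e i : ℕ} (h : i ∈ tgt a b c d e) :
    i ∈ ({3, 7, 11, 36, 48} : Finset ℕ) := by
  simp only [tgt, Multiset.mem_add, Multiset.mem_replicate] at h
  simp only [Finset.mem_insert, Finset.mem_singleton]
  rcases h with ((((⟨_,h⟩|⟨_,h⟩)|⟨_,h⟩)|⟨_,h⟩)|⟨_,h⟩) <;> omega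

lemma tgt_pos {a b c d e i : ℕ} (h : i ∈ tgt a b c d e) : 0 < i := by
  have := tgt_mem h
  simp only [Finset.mem_insert, Finset.mem_singleton] at this
  omega

lemma tgt_counts (a b c d e : ℕ) :
    (tgt a b c d e).count 3 = 3*(a%4) + 4*b + 3*(c%3) + 3*d ∧
    (tgt a b c d e).count 7 = c%3 + 3*e ∧
    (tgt a b c d e).count 11 = d ∧
    (tgt a b c d e).count 36 = a/4 ∧
    (tgt a b c d e).count 48 = c/3 := by
  simp [tgt, Multiset.count_replicate]

lemma tgt_inj {a1 b1 c1 d1 e1 a2 b2 c2 d2 e2 : ℕ}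
    (h : tgt a1 b1 c1 d1 e1 = tgt a2 b2 c2 d2 e2) :
    a1 = a2 ∧ b1 = b2 ∧ c1 = c2 ∧ d1 = d2 ∧ e1 = e2 := by
  obtain ⟨h31, h71, h111, h361, h481⟩ := tgt_counts a1 b1 c1 d1 e1
  obtain ⟨h32, h72, h112, h362, h482⟩ := tgt_counts a2 b2 c2 d2 e2
  rw [h] at h31 h71 h111 h361 h481
  rw [h32] at h31; rw [h72] at h71; rw [h112] at h111
  rw [h362] at h361; rw [h482] at h481
  omega

lemma decomp (m : Multiset ℕ) (h : ∀ i ∈ m, i ∈ ({9, 12, 16, 20, 21} : Finset ℕ)) :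
    m = Multiset.replicate (m.count 9) 9 + Multiset.replicate (m.count 12) 12 +
        Multiset.replicate (m.count 16) 16 + Multiset.replicate (m.count 20) 20 +
        Multiset.replicate (m.count 21) 21 := by
  ext j
  simp only [Multiset.count_add, Multiset.count_replicate]
  by_cases hj : j ∈ ({9, 12, 16, 20, 21} : Finset ℕ)
  · fin_cases hj <;> simp
  · have h0 : m.count j = 0 := Multiset.count_eq_zero.2 (fun hm => hj (h j hm))
    simp only [Finset.mem_insert, Finset.mem_singleton] at hj
    push_neg at hj
    obtain ⟨h1, h2, h3, h4, h5⟩ := hj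
    rw [h0, if_neg (Ne.symm h1), if_neg (Ne.symm h2), if_neg (Ne.symm h3), if_neg (Ne.symm h4), if_neg (Ne.symm h5)]

lemma decomp_sum (m : Multiset ℕ) (h : ∀ i ∈ m, i ∈ ({9, 12, 16, 20, 21} : Finset ℕ)) :
    m.sum = 9 * m.count 9 + 12 * m.count 12 + 16 * m.count 16 + 20 * m.count 20 +
      21 * m.count 21 := by
  conv_lhs => rw [decomp m h]
  simp [Multiset.sum_replicate, smul_eq_mul]
  ring

/-- The injection. -/
def f (x : ℕ) (p : Nat.Partition x) : Nat.Partition x :=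
  if h : ∀ i ∈ p.parts, i ∈ ({9, 12, 16, 20, 21} : Finset ℕ) then
    { parts := tgt (p.parts.count 9) (p.parts.count 12) (p.parts.count 16)
        (p.parts.count 20) (p.parts.count 21)
      parts_pos := fun hi => tgt_pos hi
      parts_sum := by rw [tgt_sum, ← decomp_sum p.parts h, p.parts_sum] }
  else p

end Parts37

theorem parts_3_7_11_36_48 (x : ℕ) (hx : 0 < x) :
    (Finset.univ.filter
        (fun p : Nat.Partition x => ∀ i ∈ p.parts, i ∈ ({9, 12, 16, 20, 21} : Finset ℕ))).card
      ≤ (Finset.univ.filter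
        (fun p : Nat.Partition x => ∀ i ∈ p.parts, i ∈ ({3, 7, 11, 36, 48} : Finset ℕ))).card := by
  classical
  apply Finset.card_le_card_of_injOn (Parts37.f x)
  · intro p hp
    simp only [Finset.mem_coe, Finset.mem_filter, Finset.mem_univ, true_and] at hp ⊢
    intro i hi
    rw [Parts37.f, dif_pos hp] at hi
    exact Parts37.tgt_mem hi
  · intro p1 hp1 p2 hp2 hf
    simp only [Finset.coe_filter, Finset.mem_univ, true_and, Set.mem_setOf_eq] at hp1 hp2
    rw [Parts37.f, dif_pos hp1, Parts37.f, dif_pos hp2] at hf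
    have hparts : Parts37.tgt (p1.parts.count 9) (p1.parts.count 12) (p1.parts.count 16)
        (p1.parts.count 20) (p1.parts.count 21) =
        Parts37.tgt (p2.parts.count 9) (p2.parts.count 12) (p2.parts.count 16)
        (p2.parts.count 20) (p2.parts.count 21) := congrArg Nat.Partition.parts hf
    obtain ⟨ha, hb, hc, hd, he⟩ := Parts37.tgt_inj hparts
    have : p1.parts = p2.parts := by
      rw [Parts37.decomp p1.parts hp1, Parts37.decomp p2.parts hp2, ha, hb, hc, hd, he]
    cases p1; cases p2; simp_all
end

section
/- For any positive integers n and y with gcd(n,y)=1, and integers K ≥ L ≥ 0 and f ≥ 0, every coefficient of the polynomial Σ_{s,t≥0, s+nyt=f} C(K−1+s, s)_q · C(L−1+t, t)_{q^n} − Σ_{s,t≥0, sy+nt=f} C(K−1+s, s)_q · C(L−1+t, t)_{q^n} is nonnegative. -/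
open Polynomial Finset

/-- The Gaussian (q-)binomial coefficient `C(n,k)_q`, via the Pascal recurrence
`C(n+1,k+1)_q = C(n,k)_q + q^(k+1) C(n,k+1)_q`. -/
noncomputable def gb : ℕ → ℕ → Polynomial ℤ
  | _, 0 => 1
  | 0, _ + 1 => 0
  | n + 1, k + 1 => gb n k + Polynomial.X ^ (k + 1) * gb n (k + 1)

/-- `C(L-1+t, t)_q`, with the convention that for `L = 0` this is `C(t-1,t)_q`,
i.e. `1` if `t = 0` and `0` otherwise. -/
noncomputable def gbS (L t : ℕ) : Polynomial ℤ :=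
  if L = 0 then (if t = 0 then 1 else 0) else gb (L - 1 + t) t


lemma gb_zero_right (m : ℕ) : gb m 0 = 1 := by cases m <;> rfl

lemma gb_eq_zero : ∀ {m k : ℕ}, m < k → gb m k = 0
  | 0, k + 1, _ => rfl
  | m + 1, k + 1, h => by
      rw [gb, gb_eq_zero (Nat.lt_of_succ_lt_succ h),
        gb_eq_zero (Nat.lt_of_succ_lt h), mul_zero, add_zero]

lemma gbS_succ (K s : ℕ) : gbS (K + 1) s = gb (K + s) s := by
  simp [gbS, Nat.succ_ne_zero, Nat.add_comm]

lemma gbS_eq' (K s : ℕ) : gbS K (s + 1) = gb (K + s) (s + 1) := by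
  cases K with
  | zero => simp [gbS, gb_eq_zero (Nat.lt_succ_self s)]
  | succ K => simp [gbS, Nat.succ_sub_one]; ring_nf

lemma gbS_zero_right (K : ℕ) : gbS K 0 = 1 := by
  cases K <;> simp [gbS, gb_zero_right]

lemma gbS_pascal (K s : ℕ) :
    gbS (K + 1) (s + 1) = gbS (K + 1) s + X ^ (s + 1) * gbS K (s + 1) := by
  rw [gbS_succ, gbS_succ, gbS_eq']
  show gb (K + s + 1) (s + 1) = _
  rw [gb]

def wt {k : ℕ} (a : Fin k → ℕ) : ℕ := ∑ i : Fin k, i.val * a i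

/-- one-step recursion for gbS as antidiagonal sum -/
lemma gbS_antidiag (K : ℕ) : ∀ s : ℕ,
    gbS (K + 1) s = ∑ p ∈ Finset.HasAntidiagonal.antidiagonal s, X ^ p.2 * gbS K p.2
  | 0 => by simp [gbS_zero_right]
  | s + 1 => by
      rw [Finset.Nat.sum_antidiagonal_succ (f := fun p => X ^ p.2 * gbS K p.2),
        gbS_pascal, gbS_antidiag K s, add_comm]

lemma sum_ext_zero {M : Type*} [AddCommMonoid M] {K L : ℕ} (hKL : L ≤ K) (F : Fin K → M)
    (hF : ∀ i : Fin K, L ≤ i.val → F i = 0) :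
    ∑ i, F i = ∑ j : Fin L, F (Fin.castLE hKL j) := by
  obtain ⟨m, rfl⟩ := Nat.exists_eq_add_of_le hKL
  rw [Fin.sum_univ_add]
  have h2 : ∀ i : Fin m, F (Fin.natAdd L i) = 0 := fun i => hF _ (by simp [Fin.natAdd])
  simp only [h2, Finset.sum_const_zero, add_zero]
  rfl

section phi
variable (n y L : ℕ) {K : ℕ}

def abar (a : Fin K → ℕ) : Fin K → ℕ := fun i => if i.val < L then a i % n else a i

variable {L}

def bbf (hKL : L ≤ K) (b : Fin L → ℕ) : Fin K → ℕ :=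
  fun i => if h : i.val < L then b ⟨i.val, h⟩ else 0

def phiC (hKL : L ≤ K) (a : Fin K → ℕ) (b : Fin L → ℕ) : Fin K → ℕ :=
  fun i => abar n L a i + n * bbf hKL b i +
    (if i.val = 0 then (y - 1) * ∑ j, abar n L a j else 0)

def phiD (hKL : L ≤ K) (a : Fin K → ℕ) : Fin L → ℕ :=
  fun j => a (Fin.castLE hKL j) / n

variable (hKL : L ≤ K) (a : Fin K → ℕ) (b : Fin L → ℕ)

lemma sum_bbf : ∑ i, bbf hKL b i = ∑ j, b j := by
  rw [sum_ext_zero hKL (bbf hKL b) (fun i hi => dif_neg (not_lt.2 hi))]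
  refine Finset.sum_congr rfl fun j _ => ?_
  simp [bbf, dif_pos j.isLt]

lemma sum_wt_bbf : ∑ i, i.val * bbf hKL b i = ∑ j, j.val * b j := by
  rw [sum_ext_zero hKL (fun i => i.val * bbf hKL b i)
    (fun i hi => by simp [bbf, dif_neg (not_lt.2 hi)])]
  refine Finset.sum_congr rfl fun j _ => ?_
  simp [bbf, dif_pos j.isLt]

lemma sum_abar_phiD : ∑ i, abar n L a i + n * ∑ j, phiD n hKL a j = ∑ i, a i := by
  rw [Finset.mul_sum,
    show ∑ j : Fin L, n * phiD n hKL a j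
      = ∑ j : Fin L, (fun i : Fin K => if i.val < L then n * (a i / n) else 0) (Fin.castLE hKL j)
      from Finset.sum_congr rfl fun j _ => by simp [phiD, j.isLt],
    ← sum_ext_zero hKL (fun i : Fin K => if i.val < L then n * (a i / n) else 0)
      (fun i hi => if_neg (not_lt.2 hi)), ← Finset.sum_add_distrib]
  refine Finset.sum_congr rfl fun i _ => ?_
  by_cases h : i.val < L
  · simp only [abar, if_pos h]
    exact Nat.mod_add_div _ _
  · simp [abar, if_neg h]

lemma sum_wt_abar_phiD :
    ∑ i, i.val * abar n L a i + n * ∑ j, j.val * phiD n hKL a j = ∑ i, i.val * a i := by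
  rw [Finset.mul_sum,
    show ∑ j : Fin L, n * (j.val * phiD n hKL a j)
      = ∑ j : Fin L, (fun i : Fin K => if i.val < L then i.val * (n * (a i / n)) else 0)
          (Fin.castLE hKL j)
      from Finset.sum_congr rfl fun j _ => by simp [phiD, j.isLt]; ring,
    ← sum_ext_zero hKL (fun i : Fin K => if i.val < L then i.val * (n * (a i / n)) else 0)
      (fun i hi => if_neg (not_lt.2 hi)), ← Finset.sum_add_distrib]
  refine Finset.sum_congr rfl fun i _ => ?_
  by_cases h : i.val < L
  · simp only [abar, if_pos h, ← Nat.mul_add]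
    rw [Nat.mod_add_div _ _]
  · simp [abar, if_neg h]

lemma sum_indicator_zero {M : Type*} [AddCommMonoid M] {K : ℕ} (Z : M) :
    ∑ i : Fin (K + 1), (if i.val = 0 then Z else 0) = Z := by
  rw [Fin.sum_univ_succ]
  simp

end phi


lemma euc1 {n u v u' v' : ℕ} (hu : u < n) (hu' : u' < n) (h : u + n * v = u' + n * v') :
    u = u' ∧ v = v' := by
  have h1 : u = u' := by
    have h2 := congrArg (· % n) h
    simpa [Nat.add_mul_mod_self_left, Nat.mod_eq_of_lt hu, Nat.mod_eq_of_lt hu'] using h2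
  subst h1
  exact ⟨rfl, Nat.eq_of_mul_eq_mul_left (Nat.lt_of_le_of_lt (Nat.zero_le u) hu)
    (Nat.add_left_cancel h)⟩

lemma euc2 {n y u v u' v' : ℕ} (hco : Nat.Coprime n y) (hu : u < n) (hu' : u' < n)
    (h : y * u + n * v = y * u' + n * v') : u = u' ∧ v = v' := by
  have hmod : y * u ≡ y * u' [MOD n] := by
    have h1 : (y * u + n * v) % n = (y * u' + n * v') % n := by rw [h]
    exact (by simpa [Nat.add_mul_mod_self_left] using h1 : y * u % n = y * u' % n)
  have hu2 : u ≡ u' [MOD n] := Nat.ModEq.cancel_left_of_coprime hco hmod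
  have h1 : u = u' := by
    simpa [Nat.ModEq, Nat.mod_eq_of_lt hu, Nat.mod_eq_of_lt hu'] using hu2
  subst h1
  have hn : 0 < n := Nat.lt_of_le_of_lt (Nat.zero_le u) hu
  exact ⟨rfl, Nat.eq_of_mul_eq_mul_left hn (Nat.add_left_cancel h)⟩

lemma phi_deg {K L : ℕ} (n y : ℕ) (hy : 0 < y) (hKL : L ≤ K + 1)
    (a : Fin (K + 1) → ℕ) (b : Fin L → ℕ) :
    ∑ i, phiC n y hKL a b i + (n * y) * ∑ j, phiD n hKL a j
      = y * ∑ i, a i + n * ∑ j, b j := by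
  obtain ⟨y', rfl⟩ : ∃ y', y = y' + 1 := ⟨y - 1, (Nat.succ_pred_eq_of_pos hy).symm⟩
  have h1 : ∑ i, phiC n (y' + 1) hKL a b i
      = (∑ i, abar n L a i + n * ∑ i, bbf hKL b i) + y' * ∑ i, abar n L a i := by
    unfold phiC
    rw [Finset.sum_add_distrib, sum_indicator_zero, Finset.sum_add_distrib, ← Finset.mul_sum]
    simp
  rw [h1, sum_bbf, ← sum_abar_phiD n hKL a]
  ring

lemma phi_wt {K L : ℕ} (n y : ℕ) (hKL : L ≤ K + 1)
    (a : Fin (K + 1) → ℕ) (b : Fin L → ℕ) :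
    wt (phiC n y hKL a b) + n * wt (phiD n hKL a) = wt a + n * wt b := by
  have key : ∀ i : Fin (K + 1), i.val * phiC n y hKL a b i
      = i.val * abar n L a i + n * (i.val * bbf hKL b i) := by
    intro i
    unfold phiC
    by_cases h : i.val = 0
    · rw [h]; simp
    · rw [if_neg h, add_zero]; ring
  have h1 : wt (phiC n y hKL a b)
      = ∑ i, i.val * abar n L a i + n * ∑ i, i.val * bbf hKL b i := by
    unfold wt
    rw [Finset.mul_sum, ← Finset.sum_add_distrib]
    exact Finset.sum_congr rfl fun i _ => key i
  rw [h1, sum_wt_bbf]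
  have h2 := sum_wt_abar_phiD n hKL a
  unfold wt
  omega

lemma phi_inj {K L n y : ℕ} (hn : 0 < n) (hy : 0 < y) (hco : Nat.Coprime n y)
    (hKL : L ≤ K + 1) {a a' : Fin (K + 1) → ℕ} {b b' : Fin L → ℕ}
    (hC : phiC n y hKL a b = phiC n y hKL a' b')
    (hD : phiD n hKL a = phiD n hKL a') : a = a' ∧ b = b' := by
  have h1 : ∀ i : Fin (K + 1), i.val ≠ 0 →
      abar n L a i = abar n L a' i ∧ bbf hKL b i = bbf hKL b' i := by
    intro i hi
    have hCi := congrFun hC i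
    simp only [phiC, if_neg hi, add_zero] at hCi
    by_cases h : i.val < L
    · refine euc1 ?_ ?_ hCi
      · simp only [abar, if_pos h]; exact Nat.mod_lt _ hn
      · simp only [abar, if_pos h]; exact Nat.mod_lt _ hn
    · have hb : bbf hKL b i = 0 := dif_neg h
      have hb' : bbf hKL b' i = 0 := dif_neg h
      refine ⟨by simpa [hb, hb'] using hCi, by rw [hb, hb']⟩
  have hR : ∑ j : Fin K, abar n L a j.succ = ∑ j : Fin K, abar n L a' j.succ :=
    Finset.sum_congr rfl fun j _ => (h1 j.succ (by simp)).1
  obtain ⟨y', rfl⟩ : ∃ y', y = y' + 1 := ⟨y - 1, (Nat.succ_pred_eq_of_pos hy).symm⟩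
  have hC0 := congrFun hC 0
  simp only [phiC, Fin.val_zero, if_true, eq_self_iff_true, Nat.add_sub_cancel,
    Fin.sum_univ_succ (f := fun j => abar n L a j),
    Fin.sum_univ_succ (f := fun j => abar n L a' j), hR] at hC0
  have hC0' : (y' + 1) * abar n L a 0 + n * bbf hKL b 0
      = (y' + 1) * abar n L a' 0 + n * bbf hKL b' 0 := by
    rw [Nat.mul_add, Nat.mul_add] at hC0
    linarith [hC0]
  have h0 : abar n L a 0 = abar n L a' 0 ∧ bbf hKL b 0 = bbf hKL b' 0 := by
    by_cases h : 0 < L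
    · refine euc2 hco ?_ ?_ hC0'
      · simp only [abar]; rw [if_pos (show ((0 : Fin (K + 1)) : ℕ) < L from h)]; exact Nat.mod_lt _ hn
      · simp only [abar]; rw [if_pos (show ((0 : Fin (K + 1)) : ℕ) < L from h)]; exact Nat.mod_lt _ hn
    · have hb : bbf hKL b 0 = 0 := dif_neg (by simpa using h)
      have hb' : bbf hKL b' 0 = 0 := dif_neg (by simpa using h)
      rw [hb, hb'] at hC0'
      simp only [Nat.mul_zero, Nat.add_zero] at hC0'
      exact ⟨Nat.eq_of_mul_eq_mul_left (Nat.succ_pos y') hC0', by rw [hb, hb']⟩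
  have habar : ∀ i, abar n L a i = abar n L a' i := by
    intro i
    by_cases hi : i.val = 0
    · have h2 : i = 0 := Fin.ext (by simpa using hi)
      rw [h2]; exact h0.1
    · exact (h1 i hi).1
  have hbbf : ∀ i, bbf hKL b i = bbf hKL b' i := by
    intro i
    by_cases hi : i.val = 0
    · have h2 : i = 0 := Fin.ext (by simpa using hi)
      rw [h2]; exact h0.2
    · exact (h1 i hi).2
  constructor
  · funext i
    by_cases h : i.val < L
    · have hd := congrFun hD ⟨i.val, h⟩
      simp only [phiD] at hd
      have hcast : Fin.castLE hKL (⟨i.val, h⟩ : Fin L) = i := Fin.ext rfl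
      rw [hcast] at hd
      have hm := habar i
      simp only [abar, if_pos h] at hm
      calc a i = n * (a i / n) + a i % n := (Nat.div_add_mod _ _).symm
        _ = n * (a' i / n) + a' i % n := by rw [hd, hm]
        _ = a' i := Nat.div_add_mod _ _
    · have h2 := habar i
      simpa [abar, if_neg h] using h2
  · funext j
    have h2 := hbbf (Fin.castLE hKL j)
    have hj : (Fin.castLE hKL j).val < L := j.isLt
    simp only [bbf, dif_pos hj] at h2
    simpa [show (⟨(Fin.castLE hKL j).val, hj⟩ : Fin L) = j from Fin.ext rfl] using h2

lemma wt_cons {K : ℕ} (m : ℕ) (r : Fin K → ℕ) :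
    wt (Fin.cons m r) = (∑ i, r i) + wt r := by
  unfold wt
  rw [Fin.sum_univ_succ]
  simp only [Fin.cons_zero, Fin.cons_succ, Fin.val_zero, Nat.zero_mul, Nat.zero_add, Fin.val_succ]
  rw [← Finset.sum_add_distrib]
  exact Finset.sum_congr rfl fun i _ => by ring

lemma sum_adT_succ (K s : ℕ) :
    ∑ a ∈ Finset.Nat.antidiagonalTuple (K + 1) s, (X : Polynomial ℤ) ^ wt a
      = ∑ p ∈ Finset.HasAntidiagonal.antidiagonal s,
          X ^ p.2 * ∑ r ∈ Finset.Nat.antidiagonalTuple K p.2, (X : Polynomial ℤ) ^ wt r := by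
  have h1 : ∀ p : ℕ × ℕ, (X : Polynomial ℤ) ^ p.2
        * ∑ r ∈ Finset.Nat.antidiagonalTuple K p.2, (X : Polynomial ℤ) ^ wt r
      = ∑ r ∈ Finset.Nat.antidiagonalTuple K p.2, (X : Polynomial ℤ) ^ (p.2 + wt r) := by
    intro p
    rw [Finset.mul_sum]
    exact Finset.sum_congr rfl fun r _ => by rw [← pow_add]
  simp only [h1]
  rw [Finset.sum_sigma' (Finset.HasAntidiagonal.antidiagonal s)
    (fun p => Finset.Nat.antidiagonalTuple K p.2)
    (fun p r => (X : Polynomial ℤ) ^ (p.2 + wt r))]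
  refine Finset.sum_nbij' (i := fun a => ⟨(a 0, ∑ i : Fin K, Fin.tail a i), Fin.tail a⟩)
    (j := fun m => Fin.cons m.1.1 m.2) ?_ ?_ ?_ ?_ ?_
  · intro a ha
    rw [Finset.Nat.mem_antidiagonalTuple] at ha
    rw [Finset.mem_sigma]
    refine ⟨Finset.HasAntidiagonal.mem_antidiagonal.mpr ?_, Finset.Nat.mem_antidiagonalTuple.mpr rfl⟩
    rw [← ha, Fin.sum_univ_succ]
    rfl
  · rintro ⟨⟨p1, p2⟩, r⟩ hm
    rw [Finset.mem_sigma, Finset.HasAntidiagonal.mem_antidiagonal] at hm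
    rw [Finset.Nat.mem_antidiagonalTuple, Fin.sum_cons]
    rw [Finset.Nat.mem_antidiagonalTuple.mp hm.2]
    exact hm.1
  · intro a _
    exact Fin.cons_self_tail a
  · rintro ⟨⟨p1, p2⟩, r⟩ hm
    rw [Finset.mem_sigma] at hm
    have h2 : ∑ i : Fin K, r i = p2 := Finset.Nat.mem_antidiagonalTuple.mp hm.2
    simp only [Fin.cons_zero, Fin.tail_cons, h2]
  · intro a _
    conv_lhs => rw [← Fin.cons_self_tail a, wt_cons]

lemma gbS_eq_sum : ∀ K s : ℕ,
    gbS K s = ∑ a ∈ Finset.Nat.antidiagonalTuple K s, (X : Polynomial ℤ) ^ wt a := by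
  intro K
  induction K with
  | zero =>
      intro s
      cases s with
      | zero => simp [gbS, Finset.Nat.antidiagonalTuple_zero_zero, wt]
      | succ s => simp [gbS, Finset.Nat.antidiagonalTuple_zero_succ]
  | succ K ih =>
      intro s
      rw [gbS_antidiag K s, sum_adT_succ K s]
      exact Finset.sum_congr rfl fun p _ => by rw [ih p.2]

lemma gbS_comp_eq_sum (nn L t : ℕ) :
    (gbS L t).comp ((X : Polynomial ℤ) ^ nn)
      = ∑ b ∈ Finset.Nat.antidiagonalTuple L t, (X : Polynomial ℤ) ^ (nn * wt b) := by
  rw [gbS_eq_sum, Polynomial.sum_comp]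
  exact Finset.sum_congr rfl fun b _ => by
    rw [Polynomial.X_pow_comp, ← pow_mul, Nat.mul_comm]

lemma expand (nn K L : ℕ) (A : Finset (ℕ × ℕ)) :
    ∑ p ∈ A, gbS K p.1 * (gbS L p.2).comp ((X : Polynomial ℤ) ^ nn)
      = ∑ m ∈ A.sigma (fun p =>
            Finset.Nat.antidiagonalTuple K p.1 ×ˢ Finset.Nat.antidiagonalTuple L p.2),
          (X : Polynomial ℤ) ^ (wt m.2.1 + nn * wt m.2.2) := by
  rw [Finset.sum_sigma]
  refine Finset.sum_congr rfl fun p _ => ?_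
  rw [gbS_eq_sum, gbS_comp_eq_sum, Finset.sum_mul_sum]
  rw [← Finset.sum_product']
  exact Finset.sum_congr rfl fun q _ => by rw [← pow_add]

theorem refinement_main (n y K L f : ℕ) (hn : 0 < n) (hy : 0 < y)
    (hco : Nat.Coprime n y) (hKL : L ≤ K) (x : ℕ) :
    0 ≤ ((∑ p ∈ (Finset.range (f + 1) ×ˢ Finset.range (f + 1)).filter
            (fun p => p.1 + n * y * p.2 = f),
          gbS K p.1 * (gbS L p.2).comp (Polynomial.X ^ n))
        - ∑ p ∈ (Finset.range (f + 1) ×ˢ Finset.range (f + 1)).filter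
            (fun p => p.1 * y + n * p.2 = f),
          gbS K p.1 * (gbS L p.2).comp (Polynomial.X ^ n)).coeff x := by
  cases K with
  | zero =>
      have hL : L = 0 := Nat.le_zero.mp hKL
      subst hL
      have hsummand : ∀ p : ℕ × ℕ, gbS 0 p.1 * (gbS 0 p.2).comp ((X : Polynomial ℤ) ^ n)
          = if p.1 = 0 ∧ p.2 = 0 then 1 else 0 := by
        rintro ⟨u, v⟩
        by_cases hu : u = 0 <;> by_cases hv : v = 0 <;> simp [gbS, hu, hv]
      by_cases hf : f = 0
      · subst hf
        have hprod : Finset.range (0 + 1) ×ˢ Finset.range (0 + 1) = {((0 : ℕ), (0 : ℕ))} := by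
          rw [Finset.range_one, Finset.singleton_product_singleton]
        rw [hprod]
        rw [Finset.filter_singleton, Finset.filter_singleton]
        norm_num
      · have e1 : ∑ p ∈ (Finset.range (f + 1) ×ˢ Finset.range (f + 1)).filter
            (fun p => p.1 + n * y * p.2 = f),
            gbS 0 p.1 * (gbS 0 p.2).comp ((X : Polynomial ℤ) ^ n) = 0 := by
          refine Finset.sum_eq_zero fun p hp => ?_
          rw [hsummand]
          rw [Finset.mem_filter] at hp
          refine if_neg ?_
          rintro ⟨h1, h2⟩
          exact hf (by rw [← hp.2, h1, h2]; ring)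
        have e2 : ∑ p ∈ (Finset.range (f + 1) ×ˢ Finset.range (f + 1)).filter
            (fun p => p.1 * y + n * p.2 = f),
            gbS 0 p.1 * (gbS 0 p.2).comp ((X : Polynomial ℤ) ^ n) = 0 := by
          refine Finset.sum_eq_zero fun p hp => ?_
          rw [hsummand]
          rw [Finset.mem_filter] at hp
          refine if_neg ?_
          rintro ⟨h1, h2⟩
          exact hf (by rw [← hp.2, h1, h2]; ring)
        rw [e1, e2, sub_zero, Polynomial.coeff_zero]
  | succ K' =>
      rw [expand n (K' + 1) L, expand n (K' + 1) L]
      set F : ℕ × ℕ → Finset ((Fin (K' + 1) → ℕ) × (Fin L → ℕ)) := fun p =>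
        Finset.Nat.antidiagonalTuple (K' + 1) p.1 ×ˢ Finset.Nat.antidiagonalTuple L p.2 with hF
      set S1 := ((Finset.range (f + 1) ×ˢ Finset.range (f + 1)).filter
        (fun p => p.1 + n * y * p.2 = f)).sigma F with hS1
      set S2 := ((Finset.range (f + 1) ×ˢ Finset.range (f + 1)).filter
        (fun p => p.1 * y + n * p.2 = f)).sigma F with hS2
      set Ψ : ((_ : ℕ × ℕ) × ((Fin (K' + 1) → ℕ) × (Fin L → ℕ))) →
          ((_ : ℕ × ℕ) × ((Fin (K' + 1) → ℕ) × (Fin L → ℕ))) := fun m =>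
        ⟨(∑ i, phiC n y hKL m.2.1 m.2.2 i, ∑ j, phiD n hKL m.2.1 j),
          (phiC n y hKL m.2.1 m.2.2, phiD n hKL m.2.1)⟩ with hΨ
      have hmap : ∀ m ∈ S2, Ψ m ∈ S1 := by
        rintro ⟨⟨s, t⟩, a, b⟩ hm
        simp only [hS2, hF, Finset.mem_sigma, Finset.mem_filter, Finset.mem_product,
          Finset.Nat.mem_antidiagonalTuple] at hm
        obtain ⟨⟨_, hcond⟩, ha, hb⟩ := hm
        have hdeg := phi_deg n y hy hKL a b
        rw [ha, hb] at hdeg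
        have hdeg2 : (∑ i, phiC n y hKL a b i) + n * y * ∑ j, phiD n hKL a j = f := by
          rw [hdeg, ← hcond]; ring
        simp only [hS1, hF, Finset.mem_sigma, Finset.mem_filter, Finset.mem_product,
          Finset.mem_range, Nat.lt_succ_iff]
        refine ⟨⟨⟨?_, ?_⟩, hdeg2⟩, Finset.Nat.mem_antidiagonalTuple.mpr rfl,
          Finset.Nat.mem_antidiagonalTuple.mpr rfl⟩
        · simp only [hΨ]; omega
        · have h3 : (∑ j, phiD n hKL a j) ≤ n * y * ∑ j, phiD n hKL a j :=
            Nat.le_mul_of_pos_left _ (by positivity)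
          simp only [hΨ]; omega
      have hinj : ∀ m ∈ S2, ∀ m' ∈ S2, Ψ m = Ψ m' → m = m' := by
        rintro ⟨⟨s, t⟩, a, b⟩ hm ⟨⟨s', t'⟩, a', b'⟩ hm' heq
        simp only [hS2, hF, Finset.mem_sigma, Finset.mem_filter, Finset.mem_product,
          Finset.Nat.mem_antidiagonalTuple] at hm hm'
        have h2 := congrArg (fun z => z.2) heq
        simp only [hΨ, Prod.mk.injEq] at h2
        obtain ⟨ha, hb⟩ := phi_inj hn hy hco hKL h2.1 h2.2
        subst ha; subst hb
        have hs : s = s' := by rw [← hm.2.1, ← hm'.2.1]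
        have ht : t = t' := by rw [← hm.2.2, ← hm'.2.2]
        subst hs; subst ht
        rfl
      have himg : S2.image Ψ ⊆ S1 := Finset.image_subset_iff.mpr hmap
      have hsum2 : ∑ m ∈ S2, (X : Polynomial ℤ) ^ (wt m.2.1 + n * wt m.2.2)
          = ∑ m ∈ S2.image Ψ, (X : Polynomial ℤ) ^ (wt m.2.1 + n * wt m.2.2) := by
        rw [Finset.sum_image hinj]
        exact Finset.sum_congr rfl fun m _ => by rw [hΨ]; rw [phi_wt]
      rw [hsum2, ← Finset.sum_sdiff himg, add_sub_cancel_right]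
      rw [Polynomial.finset_sum_coeff]
      refine Finset.sum_nonneg fun m _ => ?_
      rw [Polynomial.coeff_X_pow]
      split <;> norm_num
end

section
/- For any positive integers K, m, y, z, every coefficient in the power series expansion of 1/((q^z; q^m)_K) − 1/((q^{yz}; q^m)_K) is nonnegative. -/
open Finset PowerSeries

/-- All coefficients nonnegative. -/
def NN (f : PowerSeries ℚ) : Prop := ∀ n, 0 ≤ PowerSeries.coeff n f

lemma NN.mul {f g : PowerSeries ℚ} (hf : NN f) (hg : NN g) : NN (f * g) := by
  intro n
  rw [PowerSeries.coeff_mul]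
  exact Finset.sum_nonneg fun p _ => mul_nonneg (hf _) (hg _)

lemma NN.add {f g : PowerSeries ℚ} (hf : NN f) (hg : NN g) : NN (f + g) := by
  intro n
  rw [map_add]
  exact add_nonneg (hf n) (hg n)

lemma NN_X_pow (k : ℕ) : NN ((PowerSeries.X : PowerSeries ℚ) ^ k) := by
  intro n
  rw [PowerSeries.coeff_X_pow]
  split <;> norm_num

lemma NN_one : NN (1 : PowerSeries ℚ) := by
  intro n
  rw [PowerSeries.coeff_one]
  split <;> norm_num

lemma NN_geom (z t : ℕ) : NN (∑ i ∈ Finset.range t, ((PowerSeries.X : PowerSeries ℚ) ^ z) ^ i) := by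
  intro n
  rw [map_sum]
  refine Finset.sum_nonneg fun i _ => ?_
  rw [← pow_mul]
  exact NN_X_pow _ n

lemma constCoeff_one_sub (e : ℕ) (he : 0 < e) :
    PowerSeries.constantCoeff (R := ℚ) (1 - PowerSeries.X ^ e) = 1 := by
  rw [map_sub, map_one, map_pow, PowerSeries.constantCoeff_X, zero_pow he.ne', sub_zero]

lemma constCoeff_one_sub_ne (e : ℕ) (he : 0 < e) :
    PowerSeries.constantCoeff (R := ℚ) (1 - PowerSeries.X ^ e) ≠ 0 := by
  rw [constCoeff_one_sub e he]; norm_num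

lemma inv_one_sub_X_pow (e : ℕ) (he : 0 < e) :
    (1 - (PowerSeries.X : PowerSeries ℚ) ^ e)⁻¹ =
      PowerSeries.mk (fun n => if e ∣ n then (1 : ℚ) else 0) := by
  rw [eq_comm, PowerSeries.eq_inv_iff_mul_eq_one (constCoeff_one_sub_ne e he)]
  ext n
  rw [mul_comm, sub_mul, one_mul, map_sub, mul_comm, PowerSeries.coeff_mul_X_pow',
    PowerSeries.coeff_mk, PowerSeries.coeff_one]
  by_cases h0 : n = 0
  · subst h0
    have : ¬ e ≤ 0 := by omega
    simp [this]
  · by_cases hd : e ∣ n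
    · have hle : e ≤ n := Nat.le_of_dvd (Nat.pos_of_ne_zero h0) hd
      have hd' : e ∣ n - e := Nat.dvd_sub hd dvd_rfl
      simp [hd, hle, hd', PowerSeries.coeff_mk, h0]
    · by_cases hle : e ≤ n
      · have hd' : ¬ e ∣ n - e := by
          intro h
          exact hd (by have := Nat.dvd_add h (dvd_refl e); rwa [Nat.sub_add_cancel hle] at this)
        simp [hd, hle, hd', PowerSeries.coeff_mk, h0]
      · simp [hd, hle, PowerSeries.coeff_mk, h0]

lemma NN_inv_one_sub (e : ℕ) (he : 0 < e) :
    NN (1 - (PowerSeries.X : PowerSeries ℚ) ^ e)⁻¹ := by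
  rw [inv_one_sub_X_pow e he]
  intro n
  rw [PowerSeries.coeff_mk]
  split <;> norm_num

lemma NN_inv_prod (s : Finset ℕ) (e : ℕ → ℕ) (he : ∀ j ∈ s, 0 < e j) :
    NN ((∏ j ∈ s, (1 - (PowerSeries.X : PowerSeries ℚ) ^ (e j)))⁻¹) := by
  induction s using Finset.cons_induction with
  | empty => simpa using NN_one
  | cons a s ha ih =>
    rw [Finset.prod_cons, PowerSeries.mul_inv_rev]
    exact (ih fun j hj => he j (Finset.mem_cons_of_mem hj)).mul
      (NN_inv_one_sub _ (he a (Finset.mem_cons_self a s)))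

lemma NN_one_sub_mul_inv (z m K : ℕ) (hz : 0 < z) :
    NN ((1 - (PowerSeries.X : PowerSeries ℚ) ^ z) * (qp z m (K + 1))⁻¹) := by
  have h0 : (0 : ℕ) ∈ Finset.range (K + 1) := by simp
  have hsplit : qp z m (K + 1) =
      (1 - (PowerSeries.X : PowerSeries ℚ) ^ z) *
        ∏ j ∈ (Finset.range (K + 1)).erase 0, (1 - (PowerSeries.X : PowerSeries ℚ) ^ (z + j * m)) := by
    rw [qp, ← Finset.mul_prod_erase _ _ h0]
    norm_num
  rw [hsplit, PowerSeries.mul_inv_rev, ← mul_assoc, mul_comm (1 - (PowerSeries.X : PowerSeries ℚ) ^ z),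
    mul_assoc, PowerSeries.mul_inv_cancel _ (constCoeff_one_sub_ne z hz), mul_one]
  exact NN_inv_prod _ _ fun j _ => by omega

theorem L_eq_zero_case (K m y z : ℕ) (hK : 0 < K) (hm : 0 < m) (hy : 0 < y) (hz : 0 < z)
    (x : ℕ) :
    0 ≤ PowerSeries.coeff x ((qp z m K)⁻¹ - (qp (y * z) m K)⁻¹) := by
  suffices h : ∀ K, NN ((qp z m K)⁻¹ - (qp (y * z) m K)⁻¹) from h K x
  intro K
  clear hK x
  induction K with
  | zero =>
    intro n
    simp [qp]
  | succ K ih =>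
    set c := z + K * m with hc_def
    set d := y * z + K * m with hd_def
    have hc : 0 < c := by omega
    have hd : 0 < d := by positivity
    -- abbreviations
    set A : PowerSeries ℚ := qp z m K with hA
    set B : PowerSeries ℚ := qp (y * z) m K with hB
    set a : PowerSeries ℚ := 1 - PowerSeries.X ^ c with ha_def
    set b : PowerSeries ℚ := 1 - PowerSeries.X ^ d with hb_def
    set G : PowerSeries ℚ := ∑ i ∈ Finset.range (y - 1), ((PowerSeries.X : PowerSeries ℚ) ^ z) ^ i
      with hG
    have hqp1 : qp z m (K + 1) = A * a := by rw [hA, qp, Finset.prod_range_succ]; rfl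
    have hqp2 : qp (y * z) m (K + 1) = B * b := by rw [hB, qp, Finset.prod_range_succ]; rfl
    have ha' : a * a⁻¹ = 1 := PowerSeries.mul_inv_cancel _ (constCoeff_one_sub_ne c hc)
    have hb' : b * b⁻¹ = 1 := PowerSeries.mul_inv_cancel _ (constCoeff_one_sub_ne d hd)
    -- geometric identity
    obtain ⟨y', rfl⟩ : ∃ y', y = y' + 1 := ⟨y - 1, (Nat.succ_pred_eq_of_pos hy).symm⟩
    have hdc : d = c + z * ((y' + 1) - 1) := by simp [hc_def, hd_def]; ring
    have hXd : (PowerSeries.X : PowerSeries ℚ) ^ d =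
        PowerSeries.X ^ c * ((PowerSeries.X : PowerSeries ℚ) ^ z) ^ ((y' + 1) - 1) := by
      rw [← pow_mul, ← pow_add, ← hdc]
    have hgeom := geom_sum_mul ((PowerSeries.X : PowerSeries ℚ) ^ z) ((y' + 1) - 1)
    have hba : b - a = PowerSeries.X ^ c * ((1 - (PowerSeries.X : PowerSeries ℚ) ^ z) * G) := by
      rw [hb_def, ha_def, hXd, hG]
      linear_combination ((PowerSeries.X : PowerSeries ℚ) ^ c) * hgeom
    have key : (qp z m (K + 1))⁻¹ - (qp ((y' + 1) * z) m (K + 1))⁻¹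
        = (A⁻¹ - B⁻¹) * b⁻¹
          + ((1 - (PowerSeries.X : PowerSeries ℚ) ^ z) * (qp z m (K + 1))⁻¹)
            * (PowerSeries.X ^ c * (G * b⁻¹)) := by
      rw [hqp1, hqp2, PowerSeries.mul_inv_rev, PowerSeries.mul_inv_rev]
      linear_combination (A⁻¹ * b⁻¹) * ha' - (a⁻¹ * A⁻¹) * hb'
        + (a⁻¹ * A⁻¹ * b⁻¹) * hba
    rw [key]
    exact (ih.mul (NN_inv_one_sub d hd)).add
      ((NN_one_sub_mul_inv z m K hz).mul ((NN_X_pow c).mul ((NN_geom z _).mul (NN_inv_one_sub d hd))))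
end

section
/- For positive integers m, n, y, z with gcd(n,y)=1, integers K ≥ L ≥ 0, and integer f ≥ 0, let P̃_1(f,x) count partitions of x into parts z+(i−1)m with 1≤i≤K and parts nyz+(i−1)nm with 1≤i≤L whose 'flattened' norm (obtained by replacing each part z+(i−1)m by z and each part nyz+(i−1)nm by nyz and summing) equals zf; let P̃_2(f,x) count the analogous partitions into parts yz+(i−1)m (1≤i≤K) and nz+(i−1)nm (1≤i≤L) with flattened norm zf (replacing parts by yz and nz respectively). Then P̃_1(f,x) ≥ P̃_2(f,x) for all x. -/
open Finset

private def flr (n L : ℕ) {K : ℕ} (a : Fin K → ℕ) (i : Fin K) : ℕ :=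
  if (i : ℕ) < L then a i % n else a i

private def flb {K L : ℕ} (π : (Fin K → ℕ) × (Fin L → ℕ)) (i : Fin K) : ℕ :=
  if h : (i : ℕ) < L then π.2 ⟨i, h⟩ else 0

private def flq (n L : ℕ) {K : ℕ} (a : Fin K → ℕ) (i : Fin K) : ℕ :=
  if (i : ℕ) < L then a i / n else 0

private def flmap (n y : ℕ) {K L : ℕ} (hKL : L ≤ K)
    (π : (Fin K → ℕ) × (Fin L → ℕ)) : (Fin K → ℕ) × (Fin L → ℕ) :=
  (fun i => flr n L π.1 i + n * flb π i +
      (if (i : ℕ) = 0 then (y - 1) * ∑ j, flr n L π.1 j else 0),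
   fun j => π.1 ⟨j, lt_of_lt_of_le j.2 hKL⟩ / n)

private lemma sum_fin_trunc {K L : ℕ} (hKL : L ≤ K) (g : ℕ → ℕ)
    (h0 : ∀ v, L ≤ v → g v = 0) :
    ∑ i : Fin K, g (i : ℕ) = ∑ j : Fin L, g (j : ℕ) := by
  rw [Fin.sum_univ_eq_sum_range, Fin.sum_univ_eq_sum_range]
  exact (Finset.sum_subset (Finset.range_subset_range.mpr hKL)
    (fun v _ hv => h0 v (le_of_not_gt (by simpa using hv)))).symm

private lemma flmap_key (n y : ℕ) (hy : 0 < y) {K L : ℕ} (hK : 0 < K) (hKL : L ≤ K)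
    (π : (Fin K → ℕ) × (Fin L → ℕ)) (s t : ℕ) :
    (∑ i, (flmap n y hKL π).1 i * (s + (i : ℕ) * t)) +
      (∑ j, (flmap n y hKL π).2 j * (n * y * s + (j : ℕ) * (n * t))) =
    (∑ i, π.1 i * (y * s + (i : ℕ) * t)) +
      (∑ j, π.2 j * (n * s + (j : ℕ) * (n * t))) := by
  obtain ⟨Y, rfl⟩ : ∃ Y, y = Y + 1 := ⟨y - 1, by omega⟩
  obtain ⟨a, b⟩ := π
  simp only [flmap, Nat.add_sub_cancel]
  -- indicator sum
  have hind : (∑ i : Fin K, (if (i : ℕ) = 0 then Y * ∑ j, flr n L a j else 0) * (s + (i:ℕ) * t))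
      = ∑ i : Fin K, Y * flr n L a i * s := by
    rw [Finset.sum_eq_single_of_mem (⟨0, hK⟩ : Fin K) (Finset.mem_univ _)]
    · have h2 : Y * (∑ j, flr n L a j) * s = ∑ i : Fin K, Y * flr n L a i * s := by
        rw [Finset.mul_sum, Finset.sum_mul]
      rw [← h2]
      simp
    · intro j _ hj
      rw [if_neg (fun h => hj (Fin.ext h)), zero_mul]
  -- b sum
  have hb : (∑ i : Fin K, (n * flb (a, b) i) * (s + (i:ℕ) * t))
      = ∑ j : Fin L, b j * (n * s + (j:ℕ) * (n * t)) := by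
    calc ∑ i : Fin K, (n * flb (a, b) i) * (s + (i:ℕ) * t)
        = ∑ i : Fin K, (fun v => (if h : v < L then b ⟨v, h⟩ else 0) * (n * s + v * (n * t))) (i:ℕ) := by
          refine Finset.sum_congr rfl (fun i _ => ?_)
          show (n * flb (a, b) i) * (s + (i:ℕ) * t)
              = (if h : (i:ℕ) < L then b ⟨(i:ℕ), h⟩ else 0) * (n * s + (i:ℕ) * (n * t))
          by_cases h : (i:ℕ) < L
          · rw [dif_pos h]
            show (n * (if h : (i:ℕ) < L then b ⟨(i:ℕ), h⟩ else 0)) * _ = _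
            rw [dif_pos h]; ring
          · rw [dif_neg h]
            show (n * (if h : (i:ℕ) < L then b ⟨(i:ℕ), h⟩ else 0)) * _ = _
            rw [dif_neg h]; ring
      _ = ∑ j : Fin L, (fun v => (if h : v < L then b ⟨v, h⟩ else 0) * (n * s + v * (n * t))) (j:ℕ) :=
          sum_fin_trunc hKL _ (fun v hv => by
            show (if h : v < L then b ⟨v, h⟩ else 0) * (n * s + v * (n * t)) = 0
            rw [dif_neg (not_lt.mpr hv), zero_mul])
      _ = ∑ j : Fin L, b j * (n * s + (j:ℕ) * (n * t)) := by
          refine Finset.sum_congr rfl (fun j _ => ?_)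
          show (if h : (j:ℕ) < L then b ⟨(j:ℕ), h⟩ else 0) * (n * s + (j:ℕ) * (n * t)) = _
          rw [dif_pos j.2]
  -- q sum
  have hq : (∑ j : Fin L, (a ⟨j, lt_of_lt_of_le j.2 hKL⟩ / n) * (n * (Y+1) * s + (j:ℕ) * (n * t)))
      = ∑ i : Fin K, flq n L a i * (n * (Y+1) * s + (i:ℕ) * (n * t)) := by
    have h2 := sum_fin_trunc hKL
      (fun v => (if h : v < K then flq n L a ⟨v, h⟩ else 0) * (n*(Y+1)*s + v*(n*t)))
      (fun v hv => by
        show (if h : v < K then flq n L a ⟨v, h⟩ else 0) * (n*(Y+1)*s + v*(n*t)) = 0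
        by_cases h : v < K
        · rw [dif_pos h]
          have h3 : flq n L a ⟨v, h⟩ = 0 := by simp [flq, not_lt.mpr hv]
          rw [h3, zero_mul]
        · rw [dif_neg h, zero_mul])
    calc ∑ j : Fin L, (a ⟨j, lt_of_lt_of_le j.2 hKL⟩ / n) * (n * (Y+1) * s + (j:ℕ) * (n * t))
        = ∑ j : Fin L, (fun v => (if h : v < K then flq n L a ⟨v, h⟩ else 0) * (n*(Y+1)*s + v*(n*t))) (j:ℕ) := by
          refine Finset.sum_congr rfl (fun j _ => ?_)
          show _ = (if h : (j:ℕ) < K then flq n L a ⟨(j:ℕ), h⟩ else 0) * (n*(Y+1)*s + (j:ℕ)*(n*t))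
          rw [dif_pos (lt_of_lt_of_le j.2 hKL)]
          show _ = (if (j:ℕ) < L then a ⟨(j:ℕ), lt_of_lt_of_le j.2 hKL⟩ / n else 0) * _
          rw [if_pos j.2]
      _ = ∑ i : Fin K, (fun v => (if h : v < K then flq n L a ⟨v, h⟩ else 0) * (n*(Y+1)*s + v*(n*t))) (i:ℕ) := h2.symm
      _ = ∑ i : Fin K, flq n L a i * (n * (Y+1) * s + (i:ℕ) * (n * t)) := by
          refine Finset.sum_congr rfl (fun i _ => ?_)
          show (if h : (i:ℕ) < K then flq n L a ⟨(i:ℕ), h⟩ else 0) * (n*(Y+1)*s + (i:ℕ)*(n*t)) = _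
          rw [dif_pos i.2]
  -- split the first sum
  have hA : (∑ i : Fin K, (flr n L a i + n * flb (a, b) i +
        (if (i : ℕ) = 0 then Y * ∑ j, flr n L a j else 0)) * (s + (i:ℕ) * t))
      = (∑ i : Fin K, flr n L a i * (s + (i:ℕ)*t))
        + (∑ i : Fin K, (n * flb (a, b) i) * (s + (i:ℕ) * t))
        + (∑ i : Fin K, (if (i : ℕ) = 0 then Y * ∑ j, flr n L a j else 0) * (s + (i:ℕ) * t)) := by
    simp only [add_mul]
    rw [Finset.sum_add_distrib, Finset.sum_add_distrib]
  have hmain : (∑ i : Fin K, flr n L a i * (s + (i:ℕ)*t)) + (∑ i : Fin K, Y * flr n L a i * s)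
      + (∑ i : Fin K, flq n L a i * (n * (Y+1) * s + (i:ℕ) * (n * t)))
      = ∑ i : Fin K, a i * ((Y+1) * s + (i:ℕ) * t) := by
    rw [← Finset.sum_add_distrib, ← Finset.sum_add_distrib]
    refine Finset.sum_congr rfl (fun i _ => ?_)
    by_cases h : (i:ℕ) < L
    · simp only [flr, flq, if_pos h]
      conv_rhs => rw [← Nat.div_add_mod (a i) n]
      ring
    · simp only [flr, flq, if_neg h]
      ring
  rw [hA, hind, hb, hq]
  omega

private lemma flmap_inj (n y : ℕ) (hn : 0 < n) (hy : 0 < y) (hco : Nat.Coprime n y)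
    {K L : ℕ} (hK : 0 < K) (hKL : L ≤ K) :
    Function.Injective (flmap n y (K := K) (L := L) hKL) := by
  obtain ⟨Y, rfl⟩ : ∃ Y, y = Y + 1 := ⟨y - 1, by omega⟩
  intro π σ h
  have ha' : ∀ i : Fin K, flr n L π.1 i + n * flb π i +
      (if (i : ℕ) = 0 then Y * ∑ j, flr n L π.1 j else 0)
      = flr n L σ.1 i + n * flb σ i +
      (if (i : ℕ) = 0 then Y * ∑ j, flr n L σ.1 j else 0) := by
    intro i
    have h2 := congrFun (congrArg Prod.fst h) i
    simpa [flmap, Nat.add_sub_cancel] using h2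
  have hb' : ∀ j : Fin L,
      π.1 ⟨j, lt_of_lt_of_le j.2 hKL⟩ / n = σ.1 ⟨j, lt_of_lt_of_le j.2 hKL⟩ / n := by
    intro j
    have h2 := congrFun (congrArg Prod.snd h) j
    simpa [flmap] using h2
  -- Step A: indices with nonzero value
  have stepA : ∀ i : Fin K, (i : ℕ) ≠ 0 →
      flr n L π.1 i = flr n L σ.1 i ∧ flb π i = flb σ i := by
    intro i hi
    have e := ha' i
    rw [if_neg hi, if_neg hi, add_zero, add_zero] at e
    by_cases h2 : (i:ℕ) < L
    · have hlt1 : flr n L π.1 i < n := by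
        simp only [flr, if_pos h2]; exact Nat.mod_lt _ hn
      have hlt2 : flr n L σ.1 i < n := by
        simp only [flr, if_pos h2]; exact Nat.mod_lt _ hn
      have m1 : (flr n L π.1 i + n * flb π i) % n = flr n L π.1 i := by
        rw [Nat.add_mul_mod_self_left, Nat.mod_eq_of_lt hlt1]
      have hfr : flr n L π.1 i = flr n L σ.1 i := by
        rw [← m1, e, Nat.add_mul_mod_self_left, Nat.mod_eq_of_lt hlt2]
      refine ⟨hfr, ?_⟩
      rw [hfr] at e
      exact Nat.eq_of_mul_eq_mul_left hn (Nat.add_left_cancel e)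
    · have hb0 : flb π i = 0 := by simp [flb, h2]
      have hb0' : flb σ i = 0 := by simp [flb, h2]
      rw [hb0, hb0', mul_zero, add_zero, add_zero] at e
      exact ⟨e, by rw [hb0, hb0']⟩
  have haeq : ∀ i : Fin K, (i:ℕ) ≠ 0 → π.1 i = σ.1 i := by
    intro i hi
    obtain ⟨hfr, _⟩ := stepA i hi
    by_cases h2 : (i:ℕ) < L
    · have hd : π.1 i / n = σ.1 i / n := by simpa using hb' ⟨(i:ℕ), h2⟩
      have hm : π.1 i % n = σ.1 i % n := by
        simpa [flr, if_pos h2] using hfr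
      calc π.1 i = n * (π.1 i / n) + π.1 i % n := (Nat.div_add_mod _ _).symm
        _ = n * (σ.1 i / n) + σ.1 i % n := by rw [hd, hm]
        _ = σ.1 i := Nat.div_add_mod _ _
    · simpa [flr, h2] using hfr
  -- index zero
  set i0 : Fin K := ⟨0, hK⟩ with hi0
  have hRerase : ∑ j ∈ Finset.univ.erase i0, flr n L π.1 j
      = ∑ j ∈ Finset.univ.erase i0, flr n L σ.1 j := by
    refine Finset.sum_congr rfl (fun j hj => ?_)
    have hj0 : (j:ℕ) ≠ 0 := fun h0 => (Finset.mem_erase.mp hj).1 (Fin.ext h0)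
    exact (stepA j hj0).1
  have e0 := ha' i0
  rw [if_pos rfl, if_pos rfl,
    ← Finset.add_sum_erase Finset.univ (flr n L π.1) (Finset.mem_univ i0),
    ← Finset.add_sum_erase Finset.univ (flr n L σ.1) (Finset.mem_univ i0),
    hRerase] at e0
  have E3 : (Y+1) * flr n L π.1 i0 + n * flb π i0
      = (Y+1) * flr n L σ.1 i0 + n * flb σ i0 := by
    rw [mul_add, mul_add] at e0
    have hx : ∀ u : ℕ, (Y+1) * u = u + Y * u := fun u => by ring
    rw [hx, hx]
    omega
  -- split on whether L is zero
  have hz0 : flr n L π.1 i0 = flr n L σ.1 i0 ∧ flb π i0 = flb σ i0 := by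
    by_cases hL0 : 0 < L
    · have hlt1 : flr n L π.1 i0 < n := by
        simp only [flr, hi0, if_pos hL0]; exact Nat.mod_lt _ hn
      have hlt2 : flr n L σ.1 i0 < n := by
        simp only [flr, hi0, if_pos hL0]; exact Nat.mod_lt _ hn
      have hmod : ((Y+1) * flr n L π.1 i0) % n = ((Y+1) * flr n L σ.1 i0) % n := by
        have h1 : ((Y+1) * flr n L π.1 i0 + n * flb π i0) % n
            = ((Y+1) * flr n L σ.1 i0 + n * flb σ i0) % n := by rw [E3]
        rwa [Nat.add_mul_mod_self_left, Nat.add_mul_mod_self_left] at h1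
      have hmm : flr n L π.1 i0 ≡ flr n L σ.1 i0 [MOD n] :=
        Nat.ModEq.cancel_left_of_coprime hco hmod
      have hfr : flr n L π.1 i0 = flr n L σ.1 i0 := by
        have h4 := hmm
        unfold Nat.ModEq at h4
        rwa [Nat.mod_eq_of_lt hlt1, Nat.mod_eq_of_lt hlt2] at h4
      refine ⟨hfr, ?_⟩
      rw [hfr] at E3
      exact Nat.eq_of_mul_eq_mul_left hn (Nat.add_left_cancel E3)
    · have hb0 : flb π i0 = 0 := by simp [flb, hi0, hL0]
      have hb0' : flb σ i0 = 0 := by simp [flb, hi0, hL0]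
      rw [hb0, hb0', mul_zero, add_zero, add_zero] at E3
      exact ⟨Nat.eq_of_mul_eq_mul_left (by omega) E3, by rw [hb0, hb0']⟩
  -- reconstruct
  have ha0 : π.1 i0 = σ.1 i0 := by
    by_cases hL0 : 0 < L
    · have hd : π.1 i0 / n = σ.1 i0 / n := by simpa using hb' ⟨0, hL0⟩
      have hm : π.1 i0 % n = σ.1 i0 % n := by
        have h5 := hz0.1
        simpa [flr, hi0, if_pos hL0] using h5
      calc π.1 i0 = n * (π.1 i0 / n) + π.1 i0 % n := (Nat.div_add_mod _ _).symm
        _ = n * (σ.1 i0 / n) + σ.1 i0 % n := by rw [hd, hm]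
        _ = σ.1 i0 := Nat.div_add_mod _ _
    · have h5 := hz0.1
      simpa [flr, hi0, hL0] using h5
  refine Prod.ext ?_ ?_
  · funext i
    by_cases hi : (i:ℕ) = 0
    · have h6 : i = i0 := Fin.ext hi
      rw [h6]; exact ha0
    · exact haeq i hi
  · funext j
    have hjK : (j:ℕ) < K := lt_of_lt_of_le j.2 hKL
    by_cases hj : (j:ℕ) = 0
    · have hL0 : 0 < L := lt_of_le_of_lt (Nat.zero_le _) j.2
      have hj' : j = ⟨0, hL0⟩ := Fin.ext hj
      have hbb := hz0.2
      have hbv : π.2 ⟨0, hL0⟩ = σ.2 ⟨0, hL0⟩ := by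
        simpa [flb, hi0, hL0] using hbb
      rw [hj']; exact hbv
    · have hijk : ((⟨(j:ℕ), hjK⟩ : Fin K) : ℕ) ≠ 0 := hj
      have hbb := (stepA ⟨(j:ℕ), hjK⟩ hijk).2
      have h7 : π.2 j = σ.2 j := by
        simpa [flb, j.2] using hbb
      exact h7

theorem flattened_refinement (m n y z K L f : ℕ) (hm : 0 < m) (hn : 0 < n) (hy : 0 < y)
    (hz : 0 < z) (hco : Nat.Coprime n y) (hKL : L ≤ K) (x : ℕ) :
    Set.ncard {π : (Fin K → ℕ) × (Fin L → ℕ) |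
        (∑ i, π.1 i * (y * z + i.val * m)) + (∑ i, π.2 i * (n * z + i.val * (n * m))) = x ∧
        (∑ i, π.1 i * (y * z)) + (∑ i, π.2 i * (n * z)) = z * f}
      ≤ Set.ncard {π : (Fin K → ℕ) × (Fin L → ℕ) |
        (∑ i, π.1 i * (z + i.val * m)) + (∑ i, π.2 i * (n * y * z + i.val * (n * m))) = x ∧
        (∑ i, π.1 i * z) + (∑ i, π.2 i * (n * y * z)) = z * f} := by
  classical
  rcases Nat.eq_zero_or_pos K with hK | hK
  · have hL : L = 0 := by omega
    subst hK hL
    apply le_of_eq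
    congr 1
  · have hfin : {π : (Fin K → ℕ) × (Fin L → ℕ) |
        (∑ i, π.1 i * (z + i.val * m)) + (∑ i, π.2 i * (n * y * z + i.val * (n * m))) = x ∧
        (∑ i, π.1 i * z) + (∑ i, π.2 i * (n * y * z)) = z * f}.Finite := by
      apply Set.Finite.subset
        (Set.Finite.prod
          (Set.Finite.pi (fun _ : Fin K => Set.finite_Iic x))
          (Set.Finite.pi (fun _ : Fin L => Set.finite_Iic x)))
      rintro ⟨a, b⟩ ⟨h1, h2⟩
      dsimp only at h1 h2
      constructor
      · intro i _
        have hterm : a i * (z + (i:ℕ) * m) ≤ x := by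
          have hs : a i * (z + (i:ℕ) * m) ≤ ∑ i, a i * (z + (i:ℕ) * m) :=
            Finset.single_le_sum (f := fun i : Fin K => a i * (z + (i:ℕ) * m))
              (fun _ _ => Nat.zero_le _) (Finset.mem_univ i)
          omega
        have hpos : 0 < z + (i:ℕ) * m := by omega
        have h8 := Nat.le_mul_of_pos_right (a i) hpos
        simp only [Set.mem_Iic]
        omega
      · intro j _
        have hterm : b j * (n * y * z + (j:ℕ) * (n * m)) ≤ x := by
          have hs : b j * (n * y * z + (j:ℕ) * (n * m))
              ≤ ∑ j, b j * (n * y * z + (j:ℕ) * (n * m)) :=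
            Finset.single_le_sum (f := fun j : Fin L => b j * (n * y * z + (j:ℕ) * (n * m)))
              (fun _ _ => Nat.zero_le _) (Finset.mem_univ j)
          omega
        have hpos : 0 < n * y * z + (j:ℕ) * (n * m) := by positivity
        have h8 := Nat.le_mul_of_pos_right (b j) hpos
        simp only [Set.mem_Iic]
        omega
    refine Set.ncard_le_ncard_of_injOn (flmap n y hKL) ?_ ?_ hfin
    · rintro π ⟨h1, h2⟩
      constructor
      · rw [flmap_key n y hy hK hKL π z m]
        exact h1
      · have hk := flmap_key n y hy hK hKL π z 0
        simp only [mul_zero, add_zero] at hk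
        rw [hk]
        exact h2
    · exact Function.Injective.injOn (flmap_inj n y hn hy hco hK hKL)
end
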